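/- arXiv:1209.5804 — 6 statements merged into one kernel-verified Lean document; each statement's English description precedes it below -/
import Mathlib

section
/- Let a, b ∈ [0,1]. Let f : ℝ → EuclideanSpace ℝ (Fin 4) be continuous on [0,1] with f 0 = y(a,b), f 1 = z(a,b), and f t ∈ S for every t ∈ Set.Icc (0:ℝ) 1. Then eVariationOn f (Set.Icc 0 1) ≥ ENNReal.ofReal (Real.sqrt 2). -/
open scoped ENNReal

/-- The union of four 2-dimensional faces of the unit cube `[0,1]^4`. -/
def S : Set (EuclideanSpace ℝ (Fin 4)) :=
  ({v | v 1 = 0 ∧ v 3 = 0} ∪ {v | v 1 = 0 ∧ v 2 = 1} ∪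
     {v | v 0 = 1 ∧ v 3 = 0} ∪ {v | v 0 = 1 ∧ v 2 = 1}) ∩
    {v | ∀ i, v i ∈ Set.Icc (0 : ℝ) 1}

/-- The point `y(a,b) = (a, 0, b, 0)`. -/
noncomputable def yPt (a b : ℝ) : EuclideanSpace ℝ (Fin 4) :=
  (WithLp.equiv 2 (Fin 4 → ℝ)).symm ![a, 0, b, 0]

/-- The point `z(a,b) = (1, a, 1, b)`. -/
noncomputable def zPt (a b : ℝ) : EuclideanSpace ℝ (Fin 4) :=
  (WithLp.equiv 2 (Fin 4 → ℝ)).symm ![1, a, 1, b]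

section Aux

lemma aux_tri2 (a b c d : ℝ) :
    Real.sqrt ((a + c) ^ 2 + (b + d) ^ 2) ≤ Real.sqrt (a ^ 2 + b ^ 2) + Real.sqrt (c ^ 2 + d ^ 2) := by
  have h := norm_add_le (⟨a, b⟩ : ℂ) ⟨c, d⟩
  simpa [Complex.norm_def, Complex.normSq_apply, Complex.normSq_mk, Complex.ext_iff, sq] using h

lemma aux_tri3 (a1 b1 a2 b2 a3 b3 : ℝ) :
    Real.sqrt ((a1 + a2 + a3) ^ 2 + (b1 + b2 + b3) ^ 2) ≤
      Real.sqrt (a1 ^ 2 + b1 ^ 2) + Real.sqrt (a2 ^ 2 + b2 ^ 2) + Real.sqrt (a3 ^ 2 + b3 ^ 2) :=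
  (aux_tri2 (a1 + a2) (b1 + b2) a3 b3).trans (by
    have := aux_tri2 a1 b1 a2 b2
    linarith)

lemma aux_pairProd {x0 x1 y0 y1 : ℝ} (hx : x1 = 0 ∨ x0 = 1) (hy : y1 = 0 ∨ y0 = 1)
    (b1 : 0 ≤ x0) (b2 : x0 ≤ 1) (b3 : 0 ≤ x1)
    (b5 : 0 ≤ y0) (b6 : y0 ≤ 1) (b7 : 0 ≤ y1)
    (good : (x0 + x1 ≤ 1 ∧ y0 + y1 ≤ 1) ∨ (1 ≤ x0 + x1 ∧ 1 ≤ y0 + y1) ∨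
      x0 + x1 = 1 ∨ y0 + y1 = 1) :
    (x0 - y0) * (x1 - y1) ≤ 0 := by
  rcases hx with hx|hx <;> rcases hy with hy|hy <;>
    rcases good with ⟨g1,g2⟩|⟨g1,g2⟩|g|g <;> nlinarith

lemma aux_memS {v : EuclideanSpace ℝ (Fin 4)} (hv : v ∈ S) :
    (v 1 = 0 ∨ v 0 = 1) ∧ (v 3 = 0 ∨ v 2 = 1) ∧ ∀ i, v i ∈ Set.Icc (0 : ℝ) 1 := by
  obtain ⟨h1, h2⟩ := hv
  refine ⟨?_, ?_, h2⟩ <;> rcases h1 with ((h|h)|h)|h <;> simp [h.1, h.2]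

lemma aux_step {v w : EuclideanSpace ℝ (Fin 4)} (hv : v ∈ S) (hw : w ∈ S)
    (gp : (v 0 + v 1 ≤ 1 ∧ w 0 + w 1 ≤ 1) ∨ (1 ≤ v 0 + v 1 ∧ 1 ≤ w 0 + w 1) ∨
      v 0 + v 1 = 1 ∨ w 0 + w 1 = 1)
    (gq : (v 2 + v 3 ≤ 1 ∧ w 2 + w 3 ≤ 1) ∨ (1 ≤ v 2 + v 3 ∧ 1 ≤ w 2 + w 3) ∨
      v 2 + v 3 = 1 ∨ w 2 + w 3 = 1) :
    Real.sqrt (((w 0 + w 1) - (v 0 + v 1)) ^ 2 + ((w 2 + w 3) - (v 2 + v 3)) ^ 2) ≤ dist v w := by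
  obtain ⟨hv1, hv2, hvb⟩ := aux_memS hv
  obtain ⟨hw1, hw2, hwb⟩ := aux_memS hw
  have P1 : (v 0 - w 0) * (v 1 - w 1) ≤ 0 :=
    aux_pairProd hv1 hw1 (hvb 0).1 (hvb 0).2 (hvb 1).1 (hwb 0).1 (hwb 0).2 (hwb 1).1 gp
  have P2 : (v 2 - w 2) * (v 3 - w 3) ≤ 0 := by
    refine aux_pairProd (x0 := v 2) (x1 := v 3) (y0 := w 2) (y1 := w 3) ?_ ?_
      (hvb 2).1 (hvb 2).2 (hvb 3).1 (hwb 2).1 (hwb 2).2 (hwb 3).1 gq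
    · exact hv2.imp id id
    · exact hw2.imp id id
  rw [EuclideanSpace.dist_eq]
  apply Real.sqrt_le_sqrt
  simp only [Fin.sum_univ_four, Real.dist_eq, sq_abs]
  nlinarith [P1, P2]

lemma aux_lim_lower {p : ℝ → ℝ} {u w : ℝ} (hpc : ContinuousOn p (Set.Icc 0 1))
    (hu : u ∈ Set.Icc (0:ℝ) 1) (hsub : Set.Ioo u w ⊆ Set.Icc 0 1) (huw : u < w)
    (h : ∀ t ∈ Set.Ioo u w, 1 ≤ p t) : 1 ≤ p u := by
  have hcw : ContinuousWithinAt p (Set.Ioo u w) u := (hpc.continuousWithinAt hu).mono hsub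
  have hne : (nhdsWithin u (Set.Ioo u w)).NeBot := by
    apply mem_closure_iff_nhdsWithin_neBot.mp
    rw [closure_Ioo huw.ne]
    exact ⟨le_rfl, huw.le⟩
  exact ge_of_tendsto hcw (Filter.eventually_of_mem self_mem_nhdsWithin h)

lemma aux_lim_upper {p : ℝ → ℝ} {u w : ℝ} (hpc : ContinuousOn p (Set.Icc 0 1))
    (hw : w ∈ Set.Icc (0:ℝ) 1) (hsub : Set.Ioo u w ⊆ Set.Icc 0 1) (huw : u < w)
    (h : ∀ t ∈ Set.Ioo u w, p t ≤ 1) : p w ≤ 1 := by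
  have hcw : ContinuousWithinAt p (Set.Ioo u w) w := (hpc.continuousWithinAt hw).mono hsub
  have hne : (nhdsWithin w (Set.Ioo u w)).NeBot := by
    apply mem_closure_iff_nhdsWithin_neBot.mp
    rw [closure_Ioo huw.ne]
    exact ⟨huw.le, le_rfl⟩
  exact le_of_tendsto hcw (Filter.eventually_of_mem self_mem_nhdsWithin h)

lemma aux_mid {p q : ℝ → ℝ} {u w : ℝ} (hpc : ContinuousOn p (Set.Icc 0 1))
    (hqc : ContinuousOn q (Set.Icc 0 1))
    (hu : u ∈ Set.Icc (0:ℝ) 1) (hw : w ∈ Set.Icc (0:ℝ) 1) (huw : u < w)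
    (hpu : p u ≤ 1) (hqu : q u ≤ 1) (hpw : 1 ≤ p w) (hqw : 1 ≤ q w)
    (hdich : ∀ t ∈ Set.Ioo u w, (1 < p t ∧ q t < 1) ∨ (p t < 1 ∧ 1 < q t)) :
    (p u = 1 ∧ q w = 1) ∨ (q u = 1 ∧ p w = 1) := by
  have hsub : Set.Ioo u w ⊆ Set.Icc 0 1 :=
    fun t ht => ⟨hu.1.trans ht.1.le, ht.2.le.trans hw.2⟩
  by_cases hA : ∀ t ∈ Set.Ioo u w, 1 < p t ∧ q t < 1
  · left
    exact ⟨le_antisymm hpu (aux_lim_lower hpc hu hsub huw fun t ht => (hA t ht).1.le),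
      le_antisymm (aux_lim_upper hqc hw hsub huw fun t ht => (hA t ht).2.le) hqw⟩
  · right
    push_neg at hA
    obtain ⟨t1, ht1, hnot⟩ := hA
    have h1 : p t1 < 1 ∧ 1 < q t1 := by
      rcases hdich t1 ht1 with h|h
      · exact absurd (hnot h.1) (not_le.mpr h.2)
      · exact h
    have hsec : ∀ t ∈ Set.Ioo u w, p t < 1 ∧ 1 < q t := by
      intro t ht
      rcases hdich t ht with h|h
      · exfalso
        set g : ℝ → ℝ := fun s => p s - q s with hg
        have hgc : ContinuousOn g (Set.uIcc t t1) := by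
          apply (hpc.sub hqc).mono
          exact (Set.ordConnected_Ioo.uIcc_subset ht ht1).trans hsub
        have h0mem : (0:ℝ) ∈ Set.uIcc (g t) (g t1) := by
          rw [Set.mem_uIcc]
          refine Or.inr ⟨?_, ?_⟩ <;> simp only [hg] <;>
            linarith [h.1, h.2, h1.1, h1.2]
        obtain ⟨t', ht', hgt'⟩ := intermediate_value_uIcc hgc h0mem
        have ht'mem : t' ∈ Set.Ioo u w := Set.ordConnected_Ioo.uIcc_subset ht ht1 ht'
        have : p t' = q t' := by simpa [hg, sub_eq_zero] using hgt'
        rcases hdich t' ht'mem with h'|h' <;> linarith [h'.1, h'.2]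
      · exact h
    exact ⟨le_antisymm hqu (aux_lim_lower hqc hu hsub huw fun t ht => (hsec t ht).2.le),
      le_antisymm (aux_lim_upper hpc hw hsub huw fun t ht => (hsec t ht).1.le) hpw⟩

end Aux

theorem stmt0 (a b : ℝ) (ha : a ∈ Set.Icc (0 : ℝ) 1) (hb : b ∈ Set.Icc (0 : ℝ) 1)
    (f : ℝ → EuclideanSpace ℝ (Fin 4)) (hf : ContinuousOn f (Set.Icc 0 1))
    (h0 : f 0 = yPt a b) (h1 : f 1 = zPt a b)
    (hS : ∀ t ∈ Set.Icc (0 : ℝ) 1, f t ∈ S) :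
    ENNReal.ofReal (Real.sqrt 2) ≤ eVariationOn f (Set.Icc 0 1) := by
  -- coordinates at the endpoints
  have e00 : f 0 0 = a := by rw [h0]; simp [yPt]
  have e01 : f 0 1 = 0 := by rw [h0]; simp [yPt]
  have e02 : f 0 2 = b := by rw [h0]; simp [yPt]
  have e03 : f 0 3 = 0 := by rw [h0]; simp [yPt]
  have e10 : f 1 0 = 1 := by rw [h1]; simp [zPt]
  have e11 : f 1 1 = a := by rw [h1]; simp [zPt]
  have e12 : f 1 2 = 1 := by rw [h1]; simp [zPt]
  have e13 : f 1 3 = b := by rw [h1]; simp [zPt]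
  set p : ℝ → ℝ := fun t => f t 0 + f t 1 with hp
  set q : ℝ → ℝ := fun t => f t 2 + f t 3 with hq
  have hcoord : ∀ i : Fin 4, Continuous fun v : EuclideanSpace ℝ (Fin 4) => v i :=
    fun i => (EuclideanSpace.proj i : EuclideanSpace ℝ (Fin 4) →L[ℝ] ℝ).continuous
  have hpc : ContinuousOn p (Set.Icc 0 1) :=
    ((hcoord 0).comp_continuousOn hf).add ((hcoord 1).comp_continuousOn hf)
  have hqc : ContinuousOn q (Set.Icc 0 1) :=
    ((hcoord 2).comp_continuousOn hf).add ((hcoord 3).comp_continuousOn hf)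
  have hp0 : p 0 = a := by simp [hp, e00, e01]
  have hq0 : q 0 = b := by simp [hq, e02, e03]
  have hp1 : p 1 = 1 + a := by simp [hp, e10, e11]
  have hq1 : q 1 = 1 + b := by simp [hq, e12, e13]
  -- the set T1 and its sup u
  set T1 : Set ℝ := {t | t ∈ Set.Icc (0:ℝ) 1 ∧ p t ≤ 1 ∧ q t ≤ 1} with hT1
  have hT1eq : T1 = (Set.Icc (0:ℝ) 1 ∩ p ⁻¹' Set.Iic 1) ∩ (Set.Icc (0:ℝ) 1 ∩ q ⁻¹' Set.Iic 1) := by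
    ext t; simp [hT1]; tauto
  have hT1closed : IsClosed T1 := by
    rw [hT1eq]
    exact (hpc.preimage_isClosed_of_isClosed isClosed_Icc isClosed_Iic).inter
      (hqc.preimage_isClosed_of_isClosed isClosed_Icc isClosed_Iic)
  have h0T1 : (0:ℝ) ∈ T1 := ⟨⟨le_rfl, zero_le_one⟩, by rw [hp0]; exact ha.2, by rw [hq0]; exact hb.2⟩
  have hT1bdd : BddAbove T1 := bddAbove_Icc.mono fun t ht => ht.1
  set u : ℝ := sSup T1 with hu
  have huT1 : u ∈ T1 := hT1closed.csSup_mem ⟨0, h0T1⟩ hT1bdd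
  obtain ⟨hu01, hpu, hqu⟩ := huT1
  have hmaxu : ∀ t ∈ T1, t ≤ u := fun t ht => le_csSup hT1bdd ht
  -- the set T2 and its inf w
  set T2 : Set ℝ := {t | t ∈ Set.Icc u 1 ∧ 1 ≤ p t ∧ 1 ≤ q t} with hT2
  have hsubuw : Set.Icc u 1 ⊆ Set.Icc (0:ℝ) 1 := Set.Icc_subset_Icc hu01.1 le_rfl
  have hT2eq : T2 = (Set.Icc u 1 ∩ p ⁻¹' Set.Ici 1) ∩ (Set.Icc u 1 ∩ q ⁻¹' Set.Ici 1) := by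
    ext t; simp [hT2]; tauto
  have hT2closed : IsClosed T2 := by
    rw [hT2eq]
    exact ((hpc.mono hsubuw).preimage_isClosed_of_isClosed isClosed_Icc isClosed_Ici).inter
      ((hqc.mono hsubuw).preimage_isClosed_of_isClosed isClosed_Icc isClosed_Ici)
  have h1T2 : (1:ℝ) ∈ T2 :=
    ⟨⟨hu01.2, le_rfl⟩, by rw [hp1]; linarith [ha.1], by rw [hq1]; linarith [hb.1]⟩
  have hT2bdd : BddBelow T2 := bddBelow_Icc.mono fun t ht => ht.1
  set w : ℝ := sInf T2 with hw
  have hwT2 : w ∈ T2 := hT2closed.csInf_mem ⟨1, h1T2⟩ hT2bdd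
  obtain ⟨hw01, hpw, hqw⟩ := hwT2
  have hminw : ∀ t ∈ T2, w ≤ t := fun t ht => csInf_le hT2bdd ht
  have huw : u ≤ w := hw01.1
  have hwmem : w ∈ Set.Icc (0:ℝ) 1 := ⟨hu01.1.trans huw, hw01.2⟩
  -- goodness of the middle step
  have hmidgood : (p u = 1 ∧ q w = 1) ∨ (q u = 1 ∧ p w = 1) ∨ u = w := by
    rcases eq_or_lt_of_le huw with heq|hlt
    · exact Or.inr (Or.inr heq)
    · have hdich : ∀ t ∈ Set.Ioo u w, (1 < p t ∧ q t < 1) ∨ (p t < 1 ∧ 1 < q t) := by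
        intro t ht
        have ht01 : t ∈ Set.Icc (0:ℝ) 1 := ⟨hu01.1.trans ht.1.le, ht.2.le.trans hw01.2⟩
        have hn1 : ¬(p t ≤ 1 ∧ q t ≤ 1) := by
          intro hc
          exact absurd (hmaxu t ⟨ht01, hc.1, hc.2⟩) (not_le.mpr ht.1)
        have hn2 : ¬(1 ≤ p t ∧ 1 ≤ q t) := by
          intro hc
          exact absurd (hminw t ⟨⟨ht.1.le, ht01.2⟩, hc.1, hc.2⟩) (not_le.mpr ht.2)
        push_neg at hn1 hn2
        rcases le_or_gt (p t) 1 with h|h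
        · have hq' : 1 < q t := hn1 h
          have hp' : p t < 1 :=
            lt_of_le_of_ne h (fun he => absurd (hn2 he.ge) (not_lt.mpr hq'.le))
          exact Or.inr ⟨hp', hq'⟩
        · exact Or.inl ⟨h, hn2 h.le⟩
      rcases aux_mid hpc hqc hu01 hwmem hlt hpu hqu hpw hqw hdich with h|h
      · exact Or.inl h
      · exact Or.inr (Or.inl h)
  -- memberships
  have hm0 : (0:ℝ) ∈ Set.Icc (0:ℝ) 1 := ⟨le_rfl, zero_le_one⟩
  have hm1 : (1:ℝ) ∈ Set.Icc (0:ℝ) 1 := ⟨zero_le_one, le_rfl⟩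
  -- the three distance lower bounds
  have key1 : Real.sqrt ((p u - p 0) ^ 2 + (q u - q 0) ^ 2) ≤ dist (f 0) (f u) := by
    apply aux_step (hS 0 hm0) (hS u hu01)
    · exact Or.inl ⟨by show p 0 ≤ 1; rw [hp0]; exact ha.2, by show p u ≤ 1; exact hpu⟩
    · exact Or.inl ⟨by show q 0 ≤ 1; rw [hq0]; exact hb.2, by show q u ≤ 1; exact hqu⟩
  have key3 : Real.sqrt ((p 1 - p w) ^ 2 + (q 1 - q w) ^ 2) ≤ dist (f w) (f 1) := by
    apply aux_step (hS w hwmem) (hS 1 hm1)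
    · exact Or.inr (Or.inl ⟨by show 1 ≤ p w; exact hpw, by show 1 ≤ p 1; rw [hp1]; linarith [ha.1]⟩)
    · exact Or.inr (Or.inl ⟨by show 1 ≤ q w; exact hqw, by show 1 ≤ q 1; rw [hq1]; linarith [hb.1]⟩)
  have key2 : Real.sqrt ((p w - p u) ^ 2 + (q w - q u) ^ 2) ≤ dist (f u) (f w) := by
    apply aux_step (hS u hu01) (hS w hwmem)
    · show (p u ≤ 1 ∧ p w ≤ 1) ∨ (1 ≤ p u ∧ 1 ≤ p w) ∨ p u = 1 ∨ p w = 1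
      rcases hmidgood with ⟨h1', _⟩|⟨_, h2'⟩|heq
      · exact Or.inr (Or.inr (Or.inl h1'))
      · exact Or.inr (Or.inr (Or.inr h2'))
      · exact Or.inl ⟨hpu, heq ▸ hpu⟩
    · show (q u ≤ 1 ∧ q w ≤ 1) ∨ (1 ≤ q u ∧ 1 ≤ q w) ∨ q u = 1 ∨ q w = 1
      rcases hmidgood with ⟨_, h2'⟩|⟨h1', _⟩|heq
      · exact Or.inr (Or.inr (Or.inr h2'))
      · exact Or.inr (Or.inr (Or.inl h1'))
      · exact Or.inl ⟨hqu, heq ▸ hqu⟩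
  -- real inequality
  have hreal : Real.sqrt 2 ≤ dist (f 0) (f u) + dist (f u) (f w) + dist (f w) (f 1) := by
    have htri := aux_tri3 (p u - p 0) (q u - q 0) (p w - p u) (q w - q u) (p 1 - p w) (q 1 - q w)
    have hsum : (p u - p 0) + (p w - p u) + (p 1 - p w) = 1 := by rw [hp0, hp1]; ring
    have hsum' : (q u - q 0) + (q w - q u) + (q 1 - q w) = 1 := by rw [hq0, hq1]; ring
    rw [hsum, hsum'] at htri
    norm_num at htri
    linarith [key1, key2, key3]
  -- eVariation lower bound via the partition 0 ≤ u ≤ w ≤ 1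
  have hvar : ENNReal.ofReal (dist (f 0) (f u)) + ENNReal.ofReal (dist (f u) (f w)) +
      ENNReal.ofReal (dist (f w) (f 1)) ≤ eVariationOn f (Set.Icc 0 1) := by
    have e1 := eVariationOn.Icc_add_Icc f (s := Set.Icc (0:ℝ) 1) hu01.1 (huw.trans hw01.2) hu01
    have e2 := eVariationOn.Icc_add_Icc f (s := Set.Icc (0:ℝ) 1) huw hw01.2 hwmem
    have d1 : edist (f 0) (f u) ≤ eVariationOn f (Set.Icc (0:ℝ) 1 ∩ Set.Icc 0 u) :=
      eVariationOn.edist_le f ⟨hm0, le_rfl, hu01.1⟩ ⟨hu01, hu01.1, le_rfl⟩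
    have d2 : edist (f u) (f w) ≤ eVariationOn f (Set.Icc (0:ℝ) 1 ∩ Set.Icc u w) :=
      eVariationOn.edist_le f ⟨hu01, le_rfl, huw⟩ ⟨hwmem, huw, le_rfl⟩
    have d3 : edist (f w) (f 1) ≤ eVariationOn f (Set.Icc (0:ℝ) 1 ∩ Set.Icc w 1) :=
      eVariationOn.edist_le f ⟨hwmem, le_rfl, hw01.2⟩ ⟨hm1, hw01.2, le_rfl⟩
    calc ENNReal.ofReal (dist (f 0) (f u)) + ENNReal.ofReal (dist (f u) (f w)) +
        ENNReal.ofReal (dist (f w) (f 1))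
        = edist (f 0) (f u) + edist (f u) (f w) + edist (f w) (f 1) := by
          rw [edist_dist, edist_dist, edist_dist]
      _ ≤ eVariationOn f (Set.Icc (0:ℝ) 1 ∩ Set.Icc 0 u) +
          eVariationOn f (Set.Icc (0:ℝ) 1 ∩ Set.Icc u w) +
          eVariationOn f (Set.Icc (0:ℝ) 1 ∩ Set.Icc w 1) := by
          exact add_le_add (add_le_add d1 d2) d3
      _ = eVariationOn f (Set.Icc (0:ℝ) 1 ∩ Set.Icc 0 u) +
          eVariationOn f (Set.Icc (0:ℝ) 1 ∩ Set.Icc u 1) := by rw [add_assoc, e2]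
      _ = eVariationOn f (Set.Icc (0:ℝ) 1 ∩ Set.Icc 0 1) := e1
      _ = eVariationOn f (Set.Icc 0 1) := by rw [Set.inter_self]
  refine le_trans ?_ hvar
  rw [← ENNReal.ofReal_add dist_nonneg dist_nonneg, ← ENNReal.ofReal_add (by positivity) dist_nonneg]
  exact ENNReal.ofReal_le_ofReal hreal
end

section
/- Let a, b ∈ [0,1]. The infimum, over all f : ℝ → EuclideanSpace ℝ (Fin 4) that are continuous with f 0 = y(a,b), f 1 = z(a,b), and f t ∈ S for every t ∈ Set.Icc (0:ℝ) 1, of eVariationOn f (Set.Icc 0 1) equals ENNReal.ofReal (Real.sqrt 2). -/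
open scoped ENNReal

open Set

private lemma S_unpack {v : EuclideanSpace ℝ (Fin 4)} (hv : v ∈ S) :
    ((v 1 = 0 ∨ v 0 = 1) ∧ (v 3 = 0 ∨ v 2 = 1)) ∧ ∀ i, 0 ≤ v i ∧ v i ≤ 1 := by
  obtain ⟨h1, h2⟩ := hv
  constructor
  · rcases h1 with ((⟨a,b⟩|⟨a,b⟩)|⟨a,b⟩)|⟨a,b⟩ <;> tauto
  · intro i; exact ⟨(h2 i).1, (h2 i).2⟩

private lemma sq_ineq (x0 x1 y0 y1 : ℝ) (h1 : x1 = 0 ∨ x0 = 1) (h2 : y1 = 0 ∨ y0 = 1)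
    (hx1 : 0 ≤ x1) (hx0 : x0 ≤ 1) (hy1 : 0 ≤ y1) (hy0 : y0 ≤ 1) :
    ((y0 - y1) - (x0 - x1))^2 ≤ (y0 - x0)^2 + (y1 - x1)^2 := by
  rcases h1 with h1|h1 <;> rcases h2 with h2|h2 <;> subst h1 <;> subst h2 <;> nlinarith

private lemma dist4 (p q : EuclideanSpace ℝ (Fin 4)) :
    dist p q = Real.sqrt ((p 0 - q 0)^2 + (p 1 - q 1)^2 + (p 2 - q 2)^2 + (p 3 - q 3)^2) := by
  rw [EuclideanSpace.dist_eq, Fin.sum_univ_four]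
  congr 1
  simp [Real.dist_eq, sq_abs]

private lemma sqrt_add_sqrt (A B : ℝ) (hA : 0 ≤ A) (hB : 0 ≤ B) :
    Real.sqrt A + Real.sqrt B ≤ Real.sqrt 2 * Real.sqrt (A + B) := by
  have sA := Real.sq_sqrt hA
  have sB := Real.sq_sqrt hB
  have sAB := Real.sq_sqrt (by linarith : (0:ℝ) ≤ A + B)
  have s2 := Real.sq_sqrt (by norm_num : (0:ℝ) ≤ 2)
  have nA := Real.sqrt_nonneg A
  have nB := Real.sqrt_nonneg B
  have nAB := Real.sqrt_nonneg (A + B)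
  have n2 := Real.sqrt_nonneg 2
  nlinarith [sq_nonneg (Real.sqrt A - Real.sqrt B),
    sq_nonneg (Real.sqrt 2 * Real.sqrt (A+B) - Real.sqrt A - Real.sqrt B),
    sq_nonneg (Real.sqrt 2 * Real.sqrt (A+B) + Real.sqrt A + Real.sqrt B),
    mul_nonneg n2 nAB]

private lemma lip {p q : EuclideanSpace ℝ (Fin 4)} (hp : p ∈ S) (hq : q ∈ S) :
    |(q 0 - q 1) - (p 0 - p 1)| + |(q 2 - q 3) - (p 2 - p 3)| ≤ Real.sqrt 2 * dist p q := by
  obtain ⟨⟨hp01, hp23⟩, hpbox⟩ := S_unpack hp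
  obtain ⟨⟨hq01, hq23⟩, hqbox⟩ := S_unpack hq
  set A := (q 0 - p 0)^2 + (q 1 - p 1)^2 with hA
  set B := (q 2 - p 2)^2 + (q 3 - p 3)^2 with hB
  have hAnn : 0 ≤ A := by positivity
  have hBnn : 0 ≤ B := by positivity
  have h1 : |(q 0 - q 1) - (p 0 - p 1)| ≤ Real.sqrt A := by
    rw [← Real.sqrt_sq_eq_abs]
    exact Real.sqrt_le_sqrt (sq_ineq (p 0) (p 1) (q 0) (q 1) hp01 hq01
      (hpbox 1).1 (hpbox 0).2 (hqbox 1).1 (hqbox 0).2)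
  have h2 : |(q 2 - q 3) - (p 2 - p 3)| ≤ Real.sqrt B := by
    rw [← Real.sqrt_sq_eq_abs]
    exact Real.sqrt_le_sqrt (sq_ineq (p 2) (p 3) (q 2) (q 3) hp23 hq23
      (hpbox 3).1 (hpbox 2).2 (hqbox 3).1 (hqbox 2).2)
  have h3 : dist p q = Real.sqrt (A + B) := by
    rw [dist4]; congr 1; ring
  rw [h3]
  calc |(q 0 - q 1) - (p 0 - p 1)| + |(q 2 - q 3) - (p 2 - p 3)|
      ≤ Real.sqrt A + Real.sqrt B := add_le_add h1 h2
    _ ≤ Real.sqrt 2 * Real.sqrt (A + B) := sqrt_add_sqrt A B hAnn hBnn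

noncomputable def fpath (a b : ℝ) : ℝ → EuclideanSpace ℝ (Fin 4) := fun t =>
  (WithLp.equiv 2 (Fin 4 → ℝ)).symm
    ![min (a+t) 1, max (a+t-1) 0, min (b+t) 1, max (b+t-1) 0]

private lemma fpath_apply (a b t : ℝ) :
    fpath a b t 0 = min (a+t) 1 ∧ fpath a b t 1 = max (a+t-1) 0 ∧
    fpath a b t 2 = min (b+t) 1 ∧ fpath a b t 3 = max (b+t-1) 0 := by
  refine ⟨?_, ?_, ?_, ?_⟩ <;> simp [fpath, WithLp.equiv_symm_apply, PiLp.toLp_apply]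

private lemma fpath_cont (a b : ℝ) : Continuous (fpath a b) := by
  apply (PiLp.continuous_toLp 2 (fun _ : Fin 4 => ℝ)).comp
  apply continuous_pi
  intro i
  fin_cases i <;> simp <;> fun_prop

private lemma fpath_zero (a b : ℝ) (ha : a ∈ Icc (0:ℝ) 1) (hb : b ∈ Icc (0:ℝ) 1) :
    fpath a b 0 = yPt a b := by
  unfold fpath yPt
  congr 1
  funext i
  fin_cases i <;> simp [min_eq_left, max_eq_right, ha.1, ha.2, hb.1, hb.2]

private lemma fpath_one (a b : ℝ) (ha : a ∈ Icc (0:ℝ) 1) (hb : b ∈ Icc (0:ℝ) 1) :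
    fpath a b 1 = zPt a b := by
  unfold fpath zPt
  congr 1
  funext i
  fin_cases i <;> simp <;> linarith [ha.1, hb.1]

private lemma fpath_mem (a b : ℝ) (ha : a ∈ Icc (0:ℝ) 1) (hb : b ∈ Icc (0:ℝ) 1)
    (t : ℝ) (ht : t ∈ Icc (0:ℝ) 1) : fpath a b t ∈ S := by
  obtain ⟨e0, e1, e2, e3⟩ := fpath_apply a b t
  constructor
  · rcases le_total (a+t) 1 with h|h <;> rcases le_total (b+t) 1 with h'|h'
    · exact Or.inl (Or.inl (Or.inl ⟨by rw [e1]; exact max_eq_right (by linarith),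
        by rw [e3]; exact max_eq_right (by linarith)⟩))
    · exact Or.inl (Or.inl (Or.inr ⟨by rw [e1]; exact max_eq_right (by linarith),
        by rw [e2]; exact min_eq_right h'⟩))
    · exact Or.inl (Or.inr ⟨by rw [e0]; exact min_eq_right h,
        by rw [e3]; exact max_eq_right (by linarith)⟩)
    · exact Or.inr ⟨by rw [e0]; exact min_eq_right h,
        by rw [e2]; exact min_eq_right h'⟩
  · intro i
    fin_cases i <;>
      [rw [show (⟨0, by norm_num⟩ : Fin 4) = (0 : Fin 4) from rfl, e0];
       rw [show (⟨1, by norm_num⟩ : Fin 4) = (1 : Fin 4) from rfl, e1];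
       rw [show (⟨2, by norm_num⟩ : Fin 4) = (2 : Fin 4) from rfl, e2];
       rw [show (⟨3, by norm_num⟩ : Fin 4) = (3 : Fin 4) from rfl, e3]] <;>
      constructor <;>
      first
      | exact le_min (by linarith [ha.1, hb.1, ht.1]) (by norm_num)
      | exact min_le_right _ _
      | exact le_max_right _ _
      | exact max_le (by linarith [ha.2, hb.2, ht.2]) (by norm_num)

private lemma pair_lip (c x y : ℝ) :
    (min (c+x) 1 - min (c+y) 1)^2 + (max (c+x-1) 0 - max (c+y-1) 0)^2 ≤ (x-y)^2 := by
  rcases le_total (c+x) 1 with h|h <;> rcases le_total (c+y) 1 with h'|h' <;>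
    rw [min_def, min_def] <;> rw [max_def, max_def] <;>
    split_ifs <;> nlinarith

private lemma dist4' (p q : EuclideanSpace ℝ (Fin 4)) :
    dist p q = Real.sqrt ((p 0 - q 0)^2 + (p 1 - q 1)^2 + (p 2 - q 2)^2 + (p 3 - q 3)^2) := by
  rw [EuclideanSpace.dist_eq, Fin.sum_univ_four]
  congr 1
  simp [Real.dist_eq, sq_abs]

private lemma fpath_var (a b : ℝ) :
    eVariationOn (fpath a b) (Icc (0:ℝ) 1) ≤ ENNReal.ofReal (Real.sqrt 2) := by
  have hlip : LipschitzOnWith (Real.toNNReal (Real.sqrt 2)) (fpath a b) (Icc (0:ℝ) 1) := by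
    apply LipschitzOnWith.of_dist_le_mul
    intro t _ s _
    obtain ⟨e0t, e1t, e2t, e3t⟩ := fpath_apply a b t
    obtain ⟨e0s, e1s, e2s, e3s⟩ := fpath_apply a b s
    rw [dist4', e0t, e1t, e2t, e3t, e0s, e1s, e2s, e3s]
    have key : (min (a+t) 1 - min (a+s) 1)^2 + (max (a+t-1) 0 - max (a+s-1) 0)^2
        + ((min (b+t) 1 - min (b+s) 1)^2 + (max (b+t-1) 0 - max (b+s-1) 0)^2)
        ≤ 2 * (t-s)^2 := by
      have := pair_lip a t s
      have := pair_lip b t s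
      linarith
    have h2 : Real.sqrt ((min (a+t) 1 - min (a+s) 1)^2 + (max (a+t-1) 0 - max (a+s-1) 0)^2
        + (min (b+t) 1 - min (b+s) 1)^2 + (max (b+t-1) 0 - max (b+s-1) 0)^2)
        ≤ Real.sqrt (2 * (t-s)^2) := by
      apply Real.sqrt_le_sqrt; linarith
    calc _ ≤ Real.sqrt (2 * (t-s)^2) := h2
      _ = Real.sqrt 2 * |t - s| := by
          rw [Real.sqrt_mul (by norm_num), Real.sqrt_sq_eq_abs]
      _ = ↑(Real.toNNReal (Real.sqrt 2)) * dist t s := by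
          rw [Real.coe_toNNReal _ (Real.sqrt_nonneg 2), Real.dist_eq]
  have hid : eVariationOn (id : ℝ → ℝ) (Icc (0:ℝ) 1) ≤ ENNReal.ofReal 1 := by
    have := (monotoneOn_id (s := Icc (0:ℝ) 1)).eVariationOn_le
      (Set.left_mem_Icc.mpr zero_le_one) (Set.right_mem_Icc.mpr zero_le_one)
    simpa using this
  have hcomp := hlip.comp_eVariationOn_le (g := (id : ℝ → ℝ)) (s := Icc (0:ℝ) 1)
    (Set.mapsTo_id _)
  calc eVariationOn (fpath a b) (Icc (0:ℝ) 1)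
      = eVariationOn (fpath a b ∘ id) (Icc (0:ℝ) 1) := by rw [Function.comp_id]
    _ ≤ ↑(Real.toNNReal (Real.sqrt 2)) * eVariationOn (id : ℝ → ℝ) (Icc (0:ℝ) 1) := hcomp
    _ ≤ ↑(Real.toNNReal (Real.sqrt 2)) * ENNReal.ofReal 1 := by
        exact mul_le_mul_right hid _
    _ = ENNReal.ofReal (Real.sqrt 2) := by
        rw [ENNReal.ofReal_one, mul_one]; rfl

private lemma leg_bound {p q : EuclideanSpace ℝ (Fin 4)} (hp : p ∈ S) (hq : q ∈ S)
    {σ τ : ℝ} (hσ : σ = 1 ∨ σ = -1) (hτ : τ = 1 ∨ τ = -1) :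
    σ * ((q 0 - q 1) - (p 0 - p 1)) + τ * ((q 2 - q 3) - (p 2 - p 3))
      ≤ Real.sqrt 2 * dist p q := by
  refine le_trans ?_ (lip hp hq)
  have e1 := le_abs_self ((q 0 - q 1) - (p 0 - p 1))
  have e1' := neg_le_abs ((q 0 - q 1) - (p 0 - p 1))
  have e2 := le_abs_self ((q 2 - q 3) - (p 2 - p 3))
  have e2' := neg_le_abs ((q 2 - q 3) - (p 2 - p 3))
  rcases hσ with h|h <;> subst h <;> rcases hτ with h|h <;> subst h <;> nlinarith

private lemma chain_bound (f : ℝ → EuclideanSpace ℝ (Fin 4)) (t1 t2 : ℝ)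
    (h1 : (0:ℝ) ≤ t1) (h12 : t1 ≤ t2) (h2 : t2 ≤ 1) :
    edist (f t1) (f 0) + edist (f t2) (f t1) + edist (f 1) (f t2)
      ≤ eVariationOn f (Icc (0:ℝ) 1) := by
  set w : ℕ → ℝ := fun n => if n = 0 then 0 else if n = 1 then t1 else if n = 2 then t2 else 1
    with hw
  have hmono : Monotone w := by
    apply monotone_nat_of_le_succ
    intro n
    match n with
    | 0 => simpa [hw] using h1
    | 1 => simpa [hw] using h12
    | 2 => simpa [hw] using h2
    | (n+3) => simp [hw]
  have hmem : ∀ i, w i ∈ Icc (0:ℝ) 1 := by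
    intro i
    match i with
    | 0 => simp [hw]
    | 1 => simp [hw]; constructor <;> linarith
    | 2 => simp [hw]; constructor <;> linarith
    | (n+3) => simp [hw]
  have := eVariationOn.sum_le (f := f) (n := 3) hmono hmem
  simpa [Finset.sum_range_succ, hw, add_assoc] using this

private lemma coord_cont (f : ℝ → EuclideanSpace ℝ (Fin 4)) (hf : Continuous f) (i : Fin 4) :
    Continuous fun t => f t i :=
  (continuous_apply i).comp ((PiLp.continuous_ofLp 2 (fun _ : Fin 4 => ℝ)).comp hf)

private lemma finish_chain (f : ℝ → EuclideanSpace ℝ (Fin 4)) (t1 t2 : ℝ)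
    (h1 : (0:ℝ) ≤ t1) (h12 : t1 ≤ t2) (h2 : t2 ≤ 1)
    (key : Real.sqrt 2 ≤ dist (f 0) (f t1) + dist (f t1) (f t2) + dist (f t2) (f 1)) :
    ENNReal.ofReal (Real.sqrt 2) ≤ eVariationOn f (Icc (0:ℝ) 1) := by
  refine le_trans ?_ (chain_bound f t1 t2 h1 h12 h2)
  rw [edist_dist, edist_dist, edist_dist, dist_comm (f t1) (f 0), dist_comm (f t2) (f t1),
    dist_comm (f 1) (f t2)]
  calc ENNReal.ofReal (Real.sqrt 2)
      ≤ ENNReal.ofReal (dist (f 0) (f t1) + dist (f t1) (f t2) + dist (f t2) (f 1)) :=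
        ENNReal.ofReal_le_ofReal key
    _ ≤ _ := by
        refine le_trans (ENNReal.ofReal_add_le) ?_
        exact add_le_add_left ENNReal.ofReal_add_le _

private lemma lower (a b : ℝ) (ha : a ∈ Icc (0:ℝ) 1) (hb : b ∈ Icc (0:ℝ) 1)
    (f : ℝ → EuclideanSpace ℝ (Fin 4)) (hc : Continuous f)
    (h0 : f 0 = yPt a b) (h1 : f 1 = zPt a b) (hS : ∀ t ∈ Icc (0:ℝ) 1, f t ∈ S) :
    ENNReal.ofReal (Real.sqrt 2) ≤ eVariationOn f (Icc (0:ℝ) 1) := by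
  have hy0 : f 0 0 = a := by rw [h0]; simp [yPt, WithLp.equiv_symm_apply, PiLp.toLp_apply]
  have hy1 : f 0 1 = 0 := by rw [h0]; simp [yPt, WithLp.equiv_symm_apply, PiLp.toLp_apply]
  have hy2 : f 0 2 = b := by rw [h0]; simp [yPt, WithLp.equiv_symm_apply, PiLp.toLp_apply]
  have hy3 : f 0 3 = 0 := by rw [h0]; simp [yPt, WithLp.equiv_symm_apply, PiLp.toLp_apply]
  have hz0 : f 1 0 = 1 := by rw [h1]; simp [zPt, WithLp.equiv_symm_apply, PiLp.toLp_apply]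
  have hz1 : f 1 1 = a := by rw [h1]; simp [zPt, WithLp.equiv_symm_apply, PiLp.toLp_apply]
  have hz2 : f 1 2 = 1 := by rw [h1]; simp [zPt, WithLp.equiv_symm_apply, PiLp.toLp_apply]
  have hz3 : f 1 3 = b := by rw [h1]; simp [zPt, WithLp.equiv_symm_apply, PiLp.toLp_apply]
  -- find s with f s 0 = 1 and f s 1 = 0
  have hg : Continuous fun t => (1 - f t 0) - f t 1 := by
    have c0 := coord_cont f hc 0
    have c1 := coord_cont f hc 1
    fun_prop
  have hiv := intermediate_value_Icc' (zero_le_one' ℝ) hg.continuousOn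
  have h0mem : (0:ℝ) ∈ Icc ((1 - f 1 0) - f 1 1) ((1 - f 0 0) - f 0 1) := by
    rw [hy0, hy1, hz0, hz1]
    constructor <;> simp <;> linarith [ha.1, ha.2]
  obtain ⟨s, hs, hgs⟩ := hiv h0mem
  have hfsS := hS s hs
  have hs01 : f s 0 = 1 ∧ f s 1 = 0 := by
    have hcase : f s 1 = 0 ∨ f s 0 = 1 := by
      rcases hfsS.1 with ((⟨h,_⟩|⟨h,_⟩)|⟨h,_⟩)|⟨h,_⟩ <;> tauto
    simp only at hgs
    rcases hcase with h|h
    · exact ⟨by linarith, h⟩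
    · exact ⟨h, by linarith⟩
  -- find u with f u 2 = 1 and f u 3 = 0
  have hg' : Continuous fun t => (1 - f t 2) - f t 3 := by
    have c2 := coord_cont f hc 2
    have c3 := coord_cont f hc 3
    fun_prop
  have hiv' := intermediate_value_Icc' (zero_le_one' ℝ) hg'.continuousOn
  have h0mem' : (0:ℝ) ∈ Icc ((1 - f 1 2) - f 1 3) ((1 - f 0 2) - f 0 3) := by
    rw [hy2, hy3, hz2, hz3]
    constructor <;> simp <;> linarith [hb.1, hb.2]
  obtain ⟨u, hu, hgu⟩ := hiv' h0mem'
  have hfuS := hS u hu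
  have hu23 : f u 2 = 1 ∧ f u 3 = 0 := by
    have hcase : f u 3 = 0 ∨ f u 2 = 1 := by
      rcases hfuS.1 with ((⟨_,h⟩|⟨_,h⟩)|⟨_,h⟩)|⟨_,h⟩ <;> tauto
    simp only at hgu
    rcases hcase with h|h
    · exact ⟨by linarith, h⟩
    · exact ⟨h, by linarith⟩
  have hf0S : f 0 ∈ S := hS 0 (by constructor <;> norm_num)
  have hf1S : f 1 ∈ S := hS 1 (by constructor <;> norm_num)
  have sqrt2_sq := Real.sq_sqrt (by norm_num : (0:ℝ) ≤ 2)
  have sqrt2_pos : (0:ℝ) < Real.sqrt 2 := Real.sqrt_pos.mpr (by norm_num)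
  rcases le_total s u with hsu|hus
  · refine finish_chain f s u hs.1 hsu hu.2 ?_
    have L1 := leg_bound hf0S hfsS (Or.inl rfl) (Or.inl rfl)
    have L2 := leg_bound hfsS hfuS (Or.inr rfl) (Or.inl rfl)
    have L3 := leg_bound hfuS hf1S (Or.inr rfl) (Or.inr rfl)
    rw [hy0, hy1, hy2, hy3, hs01.1, hs01.2] at L1
    rw [hs01.1, hs01.2, hu23.1, hu23.2] at L2
    rw [hz0, hz1, hz2, hz3, hu23.1, hu23.2] at L3
    have dn1 := dist_nonneg (x := f 0) (y := f s)
    have dn2 := dist_nonneg (x := f s) (y := f u)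
    have dn3 := dist_nonneg (x := f u) (y := f 1)
    nlinarith [L1, L2, L3]
  · refine finish_chain f u s hu.1 hus hs.2 ?_
    have L1 := leg_bound hf0S hfuS (Or.inl rfl) (Or.inl rfl)
    have L2 := leg_bound hfuS hfsS (Or.inl rfl) (Or.inr rfl)
    have L3 := leg_bound hfsS hf1S (Or.inr rfl) (Or.inr rfl)
    rw [hy0, hy1, hy2, hy3, hu23.1, hu23.2] at L1
    rw [hs01.1, hs01.2, hu23.1, hu23.2] at L2
    rw [hz0, hz1, hz2, hz3, hs01.1, hs01.2] at L3
    have dn1 := dist_nonneg (x := f 0) (y := f u)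
    have dn2 := dist_nonneg (x := f u) (y := f s)
    have dn3 := dist_nonneg (x := f s) (y := f 1)
    nlinarith [L1, L2, L3]

theorem stmt1 (a b : ℝ) (ha : a ∈ Set.Icc (0 : ℝ) 1) (hb : b ∈ Set.Icc (0 : ℝ) 1) :
    sInf {L : ℝ≥0∞ | ∃ f : ℝ → EuclideanSpace ℝ (Fin 4),
        Continuous f ∧ f 0 = yPt a b ∧ f 1 = zPt a b ∧
          (∀ t ∈ Set.Icc (0 : ℝ) 1, f t ∈ S) ∧ L = eVariationOn f (Set.Icc 0 1)} =
      ENNReal.ofReal (Real.sqrt 2) := by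
  apply le_antisymm
  · refine le_trans (sInf_le ?_) (fpath_var a b)
    exact ⟨fpath a b, fpath_cont a b, fpath_zero a b ha hb, fpath_one a b ha hb,
      fpath_mem a b ha hb, rfl⟩
  · refine le_sInf ?_
    rintro L ⟨f, hc, h0, h1, hS, rfl⟩
    exact lower a b ha hb f hc h0 h1 hS
end

section
/- Let b ∈ [0,1]. Let f : ℝ → EuclideanSpace ℝ (Fin 3) be continuous on [0,1] with f 0 = (0, b, 0), f 1 = (1, 1, b), and f t ∈ T for every t ∈ Set.Icc (0:ℝ) 1. Then eVariationOn f (Set.Icc 0 1) ≥ ENNReal.ofReal (Real.sqrt 2). -/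
open scoped ENNReal

/-- The union of two 2-dimensional faces of the unit cube `[0,1]^3`. -/
def T : Set (EuclideanSpace ℝ (Fin 3)) :=
  ({v | v 2 = 0} ∪ {v | v 1 = 1}) ∩ {v | ∀ i, v i ∈ Set.Icc (0 : ℝ) 1}

lemma cauchy2 (a c d e : ℝ) : a*c + d*e ≤ Real.sqrt (a^2+d^2) * Real.sqrt (c^2+e^2) := by
  rcases le_or_gt (a*c + d*e) 0 with h | h
  · exact h.trans (by positivity)
  · rw [← Real.sqrt_mul (by positivity)]
    rw [show a*c+d*e = Real.sqrt ((a*c+d*e)^2) from (Real.sqrt_sq h.le).symm]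
    apply Real.sqrt_le_sqrt
    nlinarith [sq_nonneg (a*e - d*c)]

lemma minkowski2 (a c d e : ℝ) :
    Real.sqrt ((a+c)^2 + (d+e)^2) ≤ Real.sqrt (a^2+d^2) + Real.sqrt (c^2+e^2) := by
  have h1 : (0:ℝ) ≤ Real.sqrt (a^2+d^2) := Real.sqrt_nonneg _
  have h2 : (0:ℝ) ≤ Real.sqrt (c^2+e^2) := Real.sqrt_nonneg _
  have key : (a+c)^2 + (d+e)^2 ≤ (Real.sqrt (a^2+d^2) + Real.sqrt (c^2+e^2))^2 := by
    have s1 : Real.sqrt (a^2+d^2)^2 = a^2+d^2 := Real.sq_sqrt (by positivity)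
    have s2 : Real.sqrt (c^2+e^2)^2 = c^2+e^2 := Real.sq_sqrt (by positivity)
    have := cauchy2 a c d e
    nlinarith
  calc Real.sqrt ((a+c)^2 + (d+e)^2)
      ≤ Real.sqrt ((Real.sqrt (a^2+d^2) + Real.sqrt (c^2+e^2))^2) := Real.sqrt_le_sqrt key
    _ = _ := Real.sqrt_sq (by positivity)

theorem stmt2 (b : ℝ) (hb : b ∈ Set.Icc (0 : ℝ) 1)
    (f : ℝ → EuclideanSpace ℝ (Fin 3)) (hf : ContinuousOn f (Set.Icc 0 1))
    (h0 : f 0 = (WithLp.equiv 2 (Fin 3 → ℝ)).symm ![0, b, 0])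
    (h1 : f 1 = (WithLp.equiv 2 (Fin 3 → ℝ)).symm ![1, 1, b])
    (hT : ∀ t ∈ Set.Icc (0 : ℝ) 1, f t ∈ T) :
    ENNReal.ofReal (Real.sqrt 2) ≤ eVariationOn f (Set.Icc 0 1) := by
  obtain ⟨hb0, hb1⟩ := hb
  -- continuity of coordinates
  have hcoord : ∀ i : Fin 3, ContinuousOn (fun t => f t i) (Set.Icc (0:ℝ) 1) := by
    intro i
    exact (continuous_apply i).comp_continuousOn (PiLp.continuous_ofLp 2 _ |>.comp_continuousOn hf)
  set g : ℝ → ℝ := fun t => (1 - f t 1) - f t 2 with hg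
  have hgc : ContinuousOn g (Set.Icc (0:ℝ) 1) := by
    apply ContinuousOn.sub
    · exact (continuousOn_const).sub (hcoord 1)
    · exact hcoord 2
  have hg0 : g 0 = 1 - b := by simp [hg, h0]
  have hg1 : g 1 = -b := by simp [hg, h1]
  have h01 : (0:ℝ) ≤ 1 := zero_le_one
  have hmem : (0:ℝ) ∈ Set.Icc (g 1) (g 0) := by
    rw [hg0, hg1]; constructor <;> linarith
  obtain ⟨c, hc, hgc0⟩ := intermediate_value_Icc' h01 hgc hmem
  -- f c is on the edge
  have hTc := hT c hc
  obtain ⟨hcu, hcb⟩ := hTc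
  have hedge : f c 1 = 1 ∧ f c 2 = 0 := by
    have hge : 1 - f c 1 = f c 2 := by
      have : (1 - f c 1) - f c 2 = 0 := hgc0
      linarith
    rcases hcu with h | h
    · simp only [Set.mem_setOf_eq] at h
      constructor
      · linarith
      · exact h
    · simp only [Set.mem_setOf_eq] at h
      constructor
      · exact h
      · linarith
  set x := f c 0 with hx
  have hx0 : 0 ≤ x := (hcb 0).1
  have hx1 : x ≤ 1 := (hcb 0).2
  -- lower bound with chain 0, c, 1
  set u : ℕ → ℝ := fun n => if n = 0 then 0 else if n = 1 then c else 1 with hu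
  have h2k : ∀ k : ℕ, 2 ≤ k → u k = 1 := by
    intro k hk
    simp only [hu]
    rw [if_neg (by omega), if_neg (by omega)]
  have humono : Monotone u := by
    have hc0 : (0:ℝ) ≤ c := hc.1
    have hc1 : c ≤ 1 := hc.2
    intro m n hmn
    rcases Nat.lt_or_ge n 2 with hn | hn
    · have hm : m < 2 := lt_of_le_of_lt hmn hn
      interval_cases m <;> interval_cases n <;> simp only [hu] <;> norm_num <;> linarith
    · rw [h2k n hn]
      rcases Nat.lt_or_ge m 2 with hm | hm
      · interval_cases m <;> simp [hu] <;> linarith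
      · rw [h2k m hm]
  have hus : ∀ i, u i ∈ Set.Icc (0:ℝ) 1 := by
    intro i
    simp only [hu]
    split_ifs
    · exact Set.left_mem_Icc.2 zero_le_one
    · exact hc
    · exact Set.right_mem_Icc.2 zero_le_one
  have hsum := eVariationOn.sum_le (f := f) (n := 2) humono hus
  have hu0 : u 0 = 0 := rfl
  have hu1 : u 1 = c := rfl
  have hu2 : u 2 = 1 := rfl
  rw [Finset.sum_range_succ, Finset.sum_range_one, hu0, hu1, hu2] at hsum
  refine le_trans ?_ hsum
  -- compute distances
  have hd1 : dist (f 0) (f c) = Real.sqrt (x^2 + (1-b)^2) := by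
    rw [EuclideanSpace.dist_eq, Fin.sum_univ_three, h0, hedge.1, hedge.2]
    simp only [WithLp.equiv_symm_apply, PiLp.toLp_apply, Matrix.cons_val_zero, Matrix.cons_val_one,
      Matrix.head_cons, Matrix.cons_val_two, Matrix.tail_cons, Real.dist_eq, sq_abs]
    congr 1
    ring
  have hd2 : dist (f c) (f 1) = Real.sqrt ((1-x)^2 + b^2) := by
    rw [EuclideanSpace.dist_eq, Fin.sum_univ_three, h1, hedge.1, hedge.2]
    simp only [WithLp.equiv_symm_apply, PiLp.toLp_apply, Matrix.cons_val_zero, Matrix.cons_val_one,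
      Matrix.head_cons, Matrix.cons_val_two, Matrix.tail_cons, Real.dist_eq, sq_abs]
    congr 1
    ring
  have hmain : Real.sqrt 2 ≤ dist (f 0) (f c) + dist (f c) (f 1) := by
    rw [hd1, hd2]
    have := minkowski2 x (1-x) (1-b) b
    have h2 : ((x + (1-x))^2 + ((1-b) + b)^2 : ℝ) = 2 := by ring
    rw [h2] at this
    linarith
  calc ENNReal.ofReal (Real.sqrt 2)
      ≤ ENNReal.ofReal (dist (f 0) (f c) + dist (f c) (f 1)) :=
        ENNReal.ofReal_le_ofReal hmain
    _ = ENNReal.ofReal (dist (f 0) (f c)) + ENNReal.ofReal (dist (f c) (f 1)) :=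
        ENNReal.ofReal_add dist_nonneg dist_nonneg
    _ = edist (f c) (f 0) + edist (f 1) (f c) := by
        rw [dist_comm (f 0) (f c), dist_comm (f c) (f 1), ← edist_dist, ← edist_dist]
    _ = _ := by rw [add_comm]
end

section
/- Let m ≥ 1, let a, b ∈ [0,1], and let f : ℝ → EuclideanSpace ℝ (Fin (4 + m)) be continuous on [0,1]. Let π : EuclideanSpace ℝ (Fin (4+m)) → EuclideanSpace ℝ (Fin 4) be the projection onto the first four coordinates. Assume (π ∘ f) 0 = y(a,b), (π ∘ f) 1 = z(a,b), and (π ∘ f) t ∈ S for every t ∈ Set.Icc (0:ℝ) 1. If there is an index j among the last m coordinates with f 0 j ≠ f 1 j, then eVariationOn f (Set.Icc 0 1) > ENNReal.ofReal (Real.sqrt 2). -/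
open scoped ENNReal

/-- Projection of `EuclideanSpace ℝ (Fin (4+m))` onto the first four coordinates. -/
noncomputable def projFour (m : ℕ) (v : EuclideanSpace ℝ (Fin (4 + m))) :
    EuclideanSpace ℝ (Fin 4) :=
  (WithLp.equiv 2 (Fin 4 → ℝ)).symm fun i => v (Fin.castAdd m i)

/-- Two points of `ℝ⁴` "share a face" of the complex `S`. -/
def ShareFace (x y : EuclideanSpace ℝ (Fin 4)) : Prop :=
  (x 0 = y 0 ∨ x 1 = y 1) ∧ (x 2 = y 2 ∨ x 3 = y 3)

lemma shareFace_symm {x y : EuclideanSpace ℝ (Fin 4)} (h : ShareFace x y) : ShareFace y x :=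
  ⟨h.1.imp Eq.symm Eq.symm, h.2.imp Eq.symm Eq.symm⟩

lemma triple_le_sum {N : ℕ} (g : Fin N → ℝ) (hg : ∀ i, 0 ≤ g i)
    {i1 i2 i3 : Fin N} (h12 : i1 ≠ i2) (h13 : i1 ≠ i3) (h23 : i2 ≠ i3) :
    g i1 + g i2 + g i3 ≤ ∑ i, g i := by
  have h : g i1 + g i2 + g i3 = ∑ i ∈ ({i1, i2, i3} : Finset (Fin N)), g i := by
    rw [Finset.sum_insert (by simp [h12, h13]),
      Finset.sum_insert (by simp [h23]), Finset.sum_singleton]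
    ring
  rw [h]
  exact Finset.sum_le_sum_of_subset_of_nonneg (Finset.subset_univ _) (fun i _ _ => hg i)

/-- The 3-dimensional "unfolding + extra coordinate" map. -/
noncomputable def qpt (m : ℕ) (j : Fin m) (u : EuclideanSpace ℝ (Fin (4 + m))) :
    EuclideanSpace ℝ (Fin 3) :=
  (WithLp.equiv 2 (Fin 3 → ℝ)).symm
    ![u (Fin.castAdd m 0) + u (Fin.castAdd m 1),
      u (Fin.castAdd m 2) + u (Fin.castAdd m 3),
      u (Fin.natAdd 4 j)]

lemma castAdd_ne_castAdd {m : ℕ} {i i' : Fin 4} (h : i ≠ i') :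
    Fin.castAdd m i ≠ Fin.castAdd m i' := by
  intro hh
  exact h (Fin.ext (by simpa using congrArg Fin.val hh))

lemma castAdd_ne_natAdd {m : ℕ} (i : Fin 4) (j : Fin m) :
    Fin.castAdd m i ≠ Fin.natAdd 4 j := by
  intro hh
  have h2 := congrArg Fin.val hh
  simp only [Fin.coe_castAdd, Fin.coe_natAdd] at h2
  have := i.isLt
  omega

lemma key_dist (m : ℕ) (j : Fin m) (u w : EuclideanSpace ℝ (Fin (4 + m)))
    (h : ShareFace (projFour m u) (projFour m w)) :
    dist (qpt m j u) (qpt m j w) ≤ dist u w := by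
  rw [EuclideanSpace.dist_eq, EuclideanSpace.dist_eq]
  apply Real.sqrt_le_sqrt
  rw [Fin.sum_univ_three]
  have hq : ∀ v : EuclideanSpace ℝ (Fin (4+m)), (qpt m j v 0 = v (Fin.castAdd m 0) + v (Fin.castAdd m 1))
      ∧ (qpt m j v 1 = v (Fin.castAdd m 2) + v (Fin.castAdd m 3)) ∧ qpt m j v 2 = v (Fin.natAdd 4 j) :=
    fun v => ⟨rfl, rfl, rfl⟩
  rw [(hq u).1, (hq u).2.1, (hq u).2.2, (hq w).1, (hq w).2.1, (hq w).2.2]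
  obtain ⟨h01, h23⟩ := h
  have e01 : ∃ i : Fin 4, (i = 0 ∨ i = 1) ∧
      dist (u (Fin.castAdd m 0) + u (Fin.castAdd m 1)) (w (Fin.castAdd m 0) + w (Fin.castAdd m 1))
        = dist (u (Fin.castAdd m i)) (w (Fin.castAdd m i)) := by
    rcases h01 with h | h
    · exact ⟨1, Or.inr rfl, by
        have h' : u (Fin.castAdd m 0) = w (Fin.castAdd m 0) := h
        rw [Real.dist_eq, Real.dist_eq, h']
        exact congrArg abs (by ring)⟩
    · exact ⟨0, Or.inl rfl, by
        have h' : u (Fin.castAdd m 1) = w (Fin.castAdd m 1) := h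
        rw [Real.dist_eq, Real.dist_eq, h']
        exact congrArg abs (by ring)⟩
  have e23 : ∃ i : Fin 4, (i = 2 ∨ i = 3) ∧
      dist (u (Fin.castAdd m 2) + u (Fin.castAdd m 3)) (w (Fin.castAdd m 2) + w (Fin.castAdd m 3))
        = dist (u (Fin.castAdd m i)) (w (Fin.castAdd m i)) := by
    rcases h23 with h | h
    · exact ⟨3, Or.inr rfl, by
        have h' : u (Fin.castAdd m 2) = w (Fin.castAdd m 2) := h
        rw [Real.dist_eq, Real.dist_eq, h']
        exact congrArg abs (by ring)⟩
    · exact ⟨2, Or.inl rfl, by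
        have h' : u (Fin.castAdd m 3) = w (Fin.castAdd m 3) := h
        rw [Real.dist_eq, Real.dist_eq, h']
        exact congrArg abs (by ring)⟩
  obtain ⟨i1, hi1, he1⟩ := e01
  obtain ⟨i2, hi2, he2⟩ := e23
  rw [he1, he2]
  have hne12 : i1 ≠ i2 := by
    rcases hi1 with h | h <;> rcases hi2 with h' | h' <;> subst h <;> subst h' <;> decide
  exact triple_le_sum (fun i => dist (u i) (w i) ^ 2) (fun i => sq_nonneg _)
    (castAdd_ne_castAdd hne12) (castAdd_ne_natAdd i1 j) (castAdd_ne_natAdd i2 j)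

open Classical in
/-- Knock out the faces not containing `x`. -/
noncomputable def faceIte (x : EuclideanSpace ℝ (Fin 4))
    (A : Set (EuclideanSpace ℝ (Fin 4))) : Set (EuclideanSpace ℝ (Fin 4)) :=
  if x ∈ A then ∅ else A

lemma not_mem_faceIte (x : EuclideanSpace ℝ (Fin 4)) (A : Set (EuclideanSpace ℝ (Fin 4))) :
    x ∉ faceIte x A := by
  rw [faceIte]; split_ifs with h
  · exact Set.notMem_empty x
  · exact h

lemma isClosed_faceIte (x : EuclideanSpace ℝ (Fin 4)) {A : Set (EuclideanSpace ℝ (Fin 4))}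
    (hA : IsClosed A) : IsClosed (faceIte x A) := by
  rw [faceIte]; split_ifs
  · exact isClosed_empty
  · exact hA

lemma mem_of_not_mem_faceIte {x y : EuclideanSpace ℝ (Fin 4)}
    {A : Set (EuclideanSpace ℝ (Fin 4))} (hy : y ∈ A) (h : y ∉ faceIte x A) : x ∈ A := by
  by_contra hx
  rw [faceIte, if_neg hx] at h
  exact h hy

/-- Continuous induction: a local relation along `[0,1]` can be chained from `0` to `1`. -/
lemma chain_exists (Good : ℝ → ℝ → Prop)
    (hloc : ∀ t ∈ Set.Icc (0:ℝ) 1, ∃ δ > 0, ∀ s ∈ Set.Icc (0:ℝ) 1,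
      |s - t| ≤ δ → Good s t ∧ Good t s) :
    ∃ (n : ℕ) (u : ℕ → ℝ), Monotone u ∧ (∀ i, u i ∈ Set.Icc (0:ℝ) 1) ∧ u 0 = 0 ∧
      (∀ i, n ≤ i → u i = 1) ∧ ∀ i < n, Good (u i) (u (i+1)) := by
  classical
  set V : Set ℝ := {x | x ∈ Set.Icc (0:ℝ) 1 ∧ ∃ (n : ℕ) (u : ℕ → ℝ), Monotone u ∧
      (∀ i, u i ∈ Set.Icc (0:ℝ) 1) ∧ u 0 = 0 ∧ (∀ i, n ≤ i → u i = x) ∧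
      ∀ i < n, Good (u i) (u (i+1))} with hVdef
  have h0V : (0:ℝ) ∈ V :=
    ⟨⟨le_refl 0, zero_le_one⟩, 0, fun _ => 0, monotone_const,
      fun _ => ⟨le_refl 0, zero_le_one⟩, rfl, fun _ _ => rfl,
      fun i hi => absurd hi (Nat.not_lt_zero i)⟩
  have happ : ∀ x ∈ V, ∀ y ∈ Set.Icc (0:ℝ) 1, x ≤ y → Good x y → y ∈ V := by
    rintro x ⟨hx, n, u, hu, hui, hu0, hun, hg⟩ y hy hxy hgxy
    refine ⟨hy, n+1, fun i => if n < i then y else u i, ?_, ?_, ?_, ?_, ?_⟩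
    · intro i k hik
      by_cases hi : n < i
      · have hk : n < k := lt_of_lt_of_le hi hik
        simp [hi, hk]
      · by_cases hk : n < k
        · simp only [if_pos hk, if_neg hi]
          calc u i ≤ u n := hu (Nat.le_of_not_lt hi)
          _ = x := hun n le_rfl
          _ ≤ y := hxy
        · simp only [if_neg hi, if_neg hk]; exact hu hik
    · intro i; by_cases hi : n < i <;> simp [hi, hy, hui i]
    · simp [hu0]
    · intro i hi
      have h' : n < i := lt_of_lt_of_le (Nat.lt_succ_self n) hi
      simp [h']
    · intro i hi
      rcases Nat.lt_succ_iff_lt_or_eq.mp hi with h | h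
      · have h1 : ¬ n < i := Nat.not_lt.mpr h.le
        have h2 : ¬ n < i + 1 := Nat.not_lt.mpr h
        simp only [if_neg h1, if_neg h2]
        exact hg i h
      · subst h
        have h1 : ¬ i < i := lt_irrefl i
        simp only [if_neg h1, if_pos (Nat.lt_succ_self i), hun i le_rfl]
        exact hgxy
  have hVb : BddAbove V := ⟨1, fun x hx => hx.1.2⟩
  have hVne : V.Nonempty := ⟨0, h0V⟩
  set c := sSup V with hc
  have hc0 : (0:ℝ) ≤ c := le_csSup hVb h0V
  have hc1 : c ≤ 1 := csSup_le hVne (fun x hx => hx.1.2)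
  obtain ⟨δ, hδ, hδg⟩ := hloc c ⟨hc0, hc1⟩
  have hcV : c ∈ V := by
    obtain ⟨s, hsV, hs⟩ := exists_lt_of_lt_csSup hVne (by linarith : c - δ < c)
    have hsc : s ≤ c := le_csSup hVb hsV
    exact happ s hsV c ⟨hc0, hc1⟩ hsc
      ((hδg s hsV.1 (abs_le.mpr ⟨by linarith, by linarith⟩)).1)
  have hc1' : c = 1 := by
    by_contra hne
    have hlt : c < 1 := lt_of_le_of_ne hc1 hne
    set y := min 1 (c + δ) with hy
    have hyI : y ∈ Set.Icc (0:ℝ) 1 := ⟨le_min (by linarith) (by linarith), min_le_left _ _⟩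
    have hcy : c < y := lt_min hlt (by linarith)
    have hyd : |y - c| ≤ δ := abs_le.mpr ⟨by linarith, by
      have := min_le_right 1 (c + δ); linarith⟩
    have hyV : y ∈ V := happ c hcV y hyI hcy.le (hδg y hyI hyd).2
    exact absurd (le_csSup hVb hyV) (not_le.mpr hcy)
  rw [hc1'] at hcV
  obtain ⟨_, n, u, hu, hui, hu0, hun, hg⟩ := hcV
  exact ⟨n, u, hu, hui, hu0, hun, hg⟩

theorem stmt3 (m : ℕ) (hm : 1 ≤ m) (a b : ℝ)
    (ha : a ∈ Set.Icc (0 : ℝ) 1) (hb : b ∈ Set.Icc (0 : ℝ) 1)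
    (f : ℝ → EuclideanSpace ℝ (Fin (4 + m))) (hf : ContinuousOn f (Set.Icc 0 1))
    (h0 : projFour m (f 0) = yPt a b) (h1 : projFour m (f 1) = zPt a b)
    (hS : ∀ t ∈ Set.Icc (0 : ℝ) 1, projFour m (f t) ∈ S)
    (j : Fin m) (hj : f 0 (Fin.natAdd 4 j) ≠ f 1 (Fin.natAdd 4 j)) :
    ENNReal.ofReal (Real.sqrt 2) < eVariationOn f (Set.Icc 0 1) := by
  classical
  set cI : Fin (4 + m) := Fin.natAdd 4 j with hcI
  set q : ℝ → EuclideanSpace ℝ (Fin 3) := fun t => qpt m j (f t) with hqdef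
  -- coordinates at endpoints
  have h0c : ∀ i : Fin 4, f 0 (Fin.castAdd m i) = ![a, 0, b, 0] i := fun i => congrFun (congrArg WithLp.ofLp h0) i
  have h1c : ∀ i : Fin 4, f 1 (Fin.castAdd m i) = ![1, a, 1, b] i := fun i => congrFun (congrArg WithLp.ofLp h1) i
  -- continuity of the projected path
  have hprojcont : Continuous (projFour m) :=
    (PiLp.continuous_toLp _ _).comp (continuous_pi fun i =>
      (continuous_apply (Fin.castAdd m i)).comp (PiLp.continuous_ofLp _ _))
  have hpf : ContinuousOn (fun t => projFour m (f t)) (Set.Icc 0 1) :=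
    hprojcont.comp_continuousOn hf
  -- membership in the union of the four faces
  set F0 : Set (EuclideanSpace ℝ (Fin 4)) := {v | v 1 = 0 ∧ v 3 = 0} with hF0
  set F1 : Set (EuclideanSpace ℝ (Fin 4)) := {v | v 1 = 0 ∧ v 2 = 1} with hF1
  set F2 : Set (EuclideanSpace ℝ (Fin 4)) := {v | v 0 = 1 ∧ v 3 = 0} with hF2
  set F3 : Set (EuclideanSpace ℝ (Fin 4)) := {v | v 0 = 1 ∧ v 2 = 1} with hF3
  have hcoord : ∀ i : Fin 4, Continuous fun v : EuclideanSpace ℝ (Fin 4) => v i := fun i =>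
    (continuous_apply i).comp (PiLp.continuous_ofLp _ _)
  have hF0c : IsClosed F0 :=
    (isClosed_eq (hcoord 1) continuous_const).inter (isClosed_eq (hcoord 3) continuous_const)
  have hF1c : IsClosed F1 :=
    (isClosed_eq (hcoord 1) continuous_const).inter (isClosed_eq (hcoord 2) continuous_const)
  have hF2c : IsClosed F2 :=
    (isClosed_eq (hcoord 0) continuous_const).inter (isClosed_eq (hcoord 3) continuous_const)
  have hF3c : IsClosed F3 :=
    (isClosed_eq (hcoord 0) continuous_const).inter (isClosed_eq (hcoord 2) continuous_const)
  have hmem : ∀ t ∈ Set.Icc (0:ℝ) 1,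
      projFour m (f t) ∈ F0 ∪ F1 ∪ F2 ∪ F3 := fun t ht => (hS t ht).1
  -- shared face lemma for points in the union
  have hshare : ∀ x y : EuclideanSpace ℝ (Fin 4), ∀ F : Set (EuclideanSpace ℝ (Fin 4)),
      (F = F0 ∨ F = F1 ∨ F = F2 ∨ F = F3) → x ∈ F → y ∈ F → ShareFace x y := by
    rintro x y F (rfl | rfl | rfl | rfl) hx hy
    · exact ⟨Or.inr (hx.1.trans hy.1.symm), Or.inr (hx.2.trans hy.2.symm)⟩
    · exact ⟨Or.inr (hx.1.trans hy.1.symm), Or.inl (hx.2.trans hy.2.symm)⟩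
    · exact ⟨Or.inl (hx.1.trans hy.1.symm), Or.inr (hx.2.trans hy.2.symm)⟩
    · exact ⟨Or.inl (hx.1.trans hy.1.symm), Or.inl (hx.2.trans hy.2.symm)⟩
  -- local lemma: points near t share a face with the point at t
  have hloc : ∀ t ∈ Set.Icc (0:ℝ) 1, ∃ δ > 0, ∀ s ∈ Set.Icc (0:ℝ) 1, |s - t| ≤ δ →
      ShareFace (projFour m (f s)) (projFour m (f t)) := by
    intro t ht
    set x := projFour m (f t) with hx
    set G : Set (EuclideanSpace ℝ (Fin 4)) :=
      faceIte x F0 ∪ faceIte x F1 ∪ faceIte x F2 ∪ faceIte x F3 with hG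
    have hGclosed : IsClosed G :=
      (((isClosed_faceIte x hF0c).union (isClosed_faceIte x hF1c)).union
        (isClosed_faceIte x hF2c)).union (isClosed_faceIte x hF3c)
    have hxG : x ∉ G := by
      intro hmem'
      rcases hmem' with ((h | h) | h) | h
      exacts [not_mem_faceIte x F0 h, not_mem_faceIte x F1 h,
        not_mem_faceIte x F2 h, not_mem_faceIte x F3 h]
    have hev : {s : ℝ | projFour m (f s) ∈ Gᶜ} ∈ nhdsWithin t (Set.Icc (0:ℝ) 1) :=
      (hpf t ht) (hGclosed.isOpen_compl.mem_nhds hxG)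
    obtain ⟨ε, hε, hsub⟩ := Metric.mem_nhdsWithin_iff.mp hev
    refine ⟨ε / 2, by linarith, fun s hs hd => ?_⟩
    have hsball : s ∈ Metric.ball t ε := by
      rw [Metric.mem_ball, Real.dist_eq]
      linarith [abs_nonneg (s - t)]
    have hsG : projFour m (f s) ∉ G := hsub ⟨hsball, hs⟩
    have hsG0 : projFour m (f s) ∉ faceIte x F0 := fun hh => hsG (Or.inl (Or.inl (Or.inl hh)))
    have hsG1 : projFour m (f s) ∉ faceIte x F1 := fun hh => hsG (Or.inl (Or.inl (Or.inr hh)))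
    have hsG2 : projFour m (f s) ∉ faceIte x F2 := fun hh => hsG (Or.inl (Or.inr hh))
    have hsG3 : projFour m (f s) ∉ faceIte x F3 := fun hh => hsG (Or.inr hh)
    rcases hmem s hs with ((h | h) | h) | h
    · exact hshare _ _ F0 (Or.inl rfl) h (mem_of_not_mem_faceIte h hsG0)
    · exact hshare _ _ F1 (Or.inr (Or.inl rfl)) h (mem_of_not_mem_faceIte h hsG1)
    · exact hshare _ _ F2 (Or.inr (Or.inr (Or.inl rfl))) h (mem_of_not_mem_faceIte h hsG2)
    · exact hshare _ _ F3 (Or.inr (Or.inr (Or.inr rfl))) h (mem_of_not_mem_faceIte h hsG3)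
  -- the chained "good" relation
  obtain ⟨n, u, hu, hui, hu0, hun, hg⟩ := chain_exists
    (fun s t => dist (q s) (q t) ≤ dist (f s) (f t)) (by
      intro t ht
      obtain ⟨δ, hδ, hsh⟩ := hloc t ht
      refine ⟨δ, hδ, fun s hs hd => ⟨key_dist m j (f s) (f t) (hsh s hs hd),
        key_dist m j (f t) (f s) (shareFace_symm (hsh s hs hd))⟩⟩)
  have hun' : u n = 1 := hun n le_rfl
  -- endpoint distance of q
  have hd0 : (0:ℝ) < dist (f 0 cI) (f 1 cI) := dist_pos.mpr hj
  have hA0 : f 0 (Fin.castAdd m 0) = a := (h0c 0).trans rfl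
  have hA1 : f 0 (Fin.castAdd m 1) = 0 := (h0c 1).trans rfl
  have hA2 : f 0 (Fin.castAdd m 2) = b := (h0c 2).trans rfl
  have hA3 : f 0 (Fin.castAdd m 3) = 0 := (h0c 3).trans rfl
  have hB0 : f 1 (Fin.castAdd m 0) = 1 := (h1c 0).trans rfl
  have hB1 : f 1 (Fin.castAdd m 1) = a := (h1c 1).trans rfl
  have hB2 : f 1 (Fin.castAdd m 2) = 1 := (h1c 2).trans rfl
  have hB3 : f 1 (Fin.castAdd m 3) = b := (h1c 3).trans rfl
  have hq01 : dist (q 0) (q 1) = Real.sqrt (1 + 1 + dist (f 0 cI) (f 1 cI) ^ 2) := by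
    rw [EuclideanSpace.dist_eq, Fin.sum_univ_three]
    congr 1
    have e0 : q 0 0 = f 0 (Fin.castAdd m 0) + f 0 (Fin.castAdd m 1) := rfl
    have e1 : q 0 1 = f 0 (Fin.castAdd m 2) + f 0 (Fin.castAdd m 3) := rfl
    have e2 : q 0 2 = f 0 cI := rfl
    have e0' : q 1 0 = f 1 (Fin.castAdd m 0) + f 1 (Fin.castAdd m 1) := rfl
    have e1' : q 1 1 = f 1 (Fin.castAdd m 2) + f 1 (Fin.castAdd m 3) := rfl
    have e2' : q 1 2 = f 1 cI := rfl
    rw [e0, e1, e2, e0', e1', e2', hA0, hA1, hA2, hA3, hB0, hB1, hB2, hB3]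
    have d1 : dist (a + 0) (1 + a) = 1 := by
      rw [Real.dist_eq, show a + 0 - (1 + a) = -1 by ring]; norm_num
    have d2 : dist (b + 0) (1 + b) = 1 := by
      rw [Real.dist_eq, show b + 0 - (1 + b) = -1 by ring]; norm_num
    rw [d1, d2]
    ring
  have hqlt : Real.sqrt 2 < dist (q 0) (q 1) := by
    rw [hq01]
    apply Real.sqrt_lt_sqrt (by norm_num)
    nlinarith [sq_nonneg (dist (f 0 cI) (f 1 cI))]
  -- assemble
  have htri : dist (q 0) (q 1) ≤ ∑ i ∈ Finset.range n, dist (q (u i)) (q (u (i + 1))) := by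
    have := dist_le_range_sum_dist (fun i => q (u i)) n
    rwa [hu0, hun'] at this
  have hsum : ∑ i ∈ Finset.range n, dist (q (u i)) (q (u (i + 1)))
      ≤ ∑ i ∈ Finset.range n, dist (f (u i)) (f (u (i + 1))) := by
    apply Finset.sum_le_sum
    intro i hi
    exact (hg i (Finset.mem_range.mp hi))
  calc ENNReal.ofReal (Real.sqrt 2)
      < ENNReal.ofReal (dist (q 0) (q 1)) := by
        rw [ENNReal.ofReal_lt_ofReal_iff (lt_of_le_of_lt (Real.sqrt_nonneg 2) hqlt)]
        exact hqlt
    _ ≤ ENNReal.ofReal (∑ i ∈ Finset.range n, dist (f (u i)) (f (u (i + 1)))) :=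
        ENNReal.ofReal_le_ofReal (le_trans htri hsum)
    _ = ∑ i ∈ Finset.range n, edist (f (u (i + 1))) (f (u i)) := by
        rw [ENNReal.ofReal_sum_of_nonneg (fun i _ => dist_nonneg)]
        refine Finset.sum_congr rfl fun i _ => ?_
        rw [edist_dist, dist_comm]
    _ ≤ eVariationOn f (Set.Icc 0 1) := eVariationOn.sum_le (f := f) (n := n) hu hui
end

section
/- Let m ≥ 1, let a, b ∈ [0,1], and let f : ℝ → EuclideanSpace ℝ (Fin (4 + m)) be continuous on [0,1]. Let π : EuclideanSpace ℝ (Fin (4+m)) → EuclideanSpace ℝ (Fin 4) be the projection onto the first four coordinates. Assume (π ∘ f) 0 = y(a,b), (π ∘ f) 1 = z(a,b), and (π ∘ f) t ∈ S for every t ∈ Set.Icc (0:ℝ) 1. If there is an index j among the last m coordinates with |f 1 j − f 0 j| ≥ 1/2, then eVariationOn f (Set.Icc 0 1) ≥ ENNReal.ofReal (3/2). -/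
open scoped ENNReal

lemma sqrt3_ge (x y z : ℝ) :
    (2*|x| + 2*|y| + |z|)/3 ≤ Real.sqrt (x^2 + y^2 + z^2) := by
  have hs : (0:ℝ) ≤ x^2 + y^2 + z^2 := by positivity
  have h1 := Real.sq_sqrt hs
  have h2 := Real.sqrt_nonneg (x^2 + y^2 + z^2)
  have hx : |x|^2 = x^2 := sq_abs x
  have hy : |y|^2 = y^2 := sq_abs y
  have hz : |z|^2 = z^2 := sq_abs z
  nlinarith [sq_nonneg (|x| - |y|), sq_nonneg (|x| - 2*|z|), sq_nonneg (|y| - 2*|z|),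
    sq_nonneg (2*|x| + 2*|y| + |z| - 3*Real.sqrt (x^2+y^2+z^2)), abs_nonneg x, abs_nonneg y, abs_nonneg z]

lemma dist3 {n : ℕ} (v w : EuclideanSpace ℝ (Fin n)) (i j k : Fin n)
    (hij : i ≠ j) (hik : i ≠ k) (hjk : j ≠ k) :
    Real.sqrt ((v i - w i)^2 + (v j - w j)^2 + (v k - w k)^2) ≤ dist v w := by
  rw [EuclideanSpace.dist_eq]
  apply Real.sqrt_le_sqrt
  have hsub : ({i, j, k} : Finset (Fin n)) ⊆ Finset.univ := Finset.subset_univ _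
  have : ∑ l ∈ ({i, j, k} : Finset (Fin n)), dist (v l) (w l) ^ 2
      = (v i - w i)^2 + (v j - w j)^2 + (v k - w k)^2 := by
    rw [Finset.sum_insert (by simp [hij, hik]), Finset.sum_insert (by simp [hjk]),
      Finset.sum_singleton]
    simp [Real.dist_eq, sq_abs]
    ring
  rw [← this]
  exact Finset.sum_le_sum_of_subset_of_nonneg hsub (fun _ _ _ => by positivity)

lemma dist_lb {n : ℕ} (v w : EuclideanSpace ℝ (Fin n)) (i j k : Fin n)
    (hij : i ≠ j) (hik : i ≠ k) (hjk : j ≠ k) :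
    (2*|v i - w i| + 2*|v j - w j| + |v k - w k|)/3 ≤ dist v w :=
  le_trans (sqrt3_ge _ _ _) (dist3 v w i j k hij hik hjk)

lemma evar_lb {E : Type*} [PseudoMetricSpace E] (f : ℝ → E) (s1 s2 : ℝ)
    (h0 : 0 ≤ s1) (h12 : s1 ≤ s2) (h21 : s2 ≤ 1) :
    ENNReal.ofReal (dist (f 0) (f s1) + dist (f s1) (f s2) + dist (f s2) (f 1))
      ≤ eVariationOn f (Set.Icc 0 1) := by
  set s : Set ℝ := Set.Icc 0 1 with hs
  have hs1 : s1 ∈ s := ⟨h0, le_trans h12 h21⟩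
  have hs2 : s2 ∈ s := ⟨le_trans h0 h12, h21⟩
  have e2 : eVariationOn f (s ∩ Set.Icc s1 s2) + eVariationOn f (s ∩ Set.Icc s2 1)
      = eVariationOn f (s ∩ Set.Icc s1 1) := eVariationOn.Icc_add_Icc f h12 h21 hs2
  have e1 : eVariationOn f (s ∩ Set.Icc 0 s1) + eVariationOn f (s ∩ Set.Icc s1 1)
      = eVariationOn f (s ∩ Set.Icc 0 1) := eVariationOn.Icc_add_Icc f h0 (le_trans h12 h21) hs1
  have etot : eVariationOn f (s ∩ Set.Icc 0 s1) + eVariationOn f (s ∩ Set.Icc s1 s2)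
      + eVariationOn f (s ∩ Set.Icc s2 1) = eVariationOn f s := by
    rw [add_assoc, e2, e1, hs, Set.inter_self]
  rw [ENNReal.ofReal_add (by positivity) dist_nonneg,
    ENNReal.ofReal_add (by positivity) dist_nonneg, ← etot, ← edist_dist, ← edist_dist,
    ← edist_dist]
  gcongr
  · exact eVariationOn.edist_le f ⟨⟨le_refl 0, le_trans h0 (le_trans h12 h21)⟩, le_refl 0, h0⟩
      ⟨hs1, h0, le_refl s1⟩
  · exact eVariationOn.edist_le f ⟨hs1, le_refl s1, h12⟩ ⟨hs2, h12, le_refl s2⟩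
  · exact eVariationOn.edist_le f ⟨hs2, le_refl s2, h21⟩
      ⟨⟨le_trans (le_trans h0 h12) h21, le_refl 1⟩, h21, le_refl 1⟩

theorem stmt4 (m : ℕ) (hm : 1 ≤ m) (a b : ℝ)
    (ha : a ∈ Set.Icc (0 : ℝ) 1) (hb : b ∈ Set.Icc (0 : ℝ) 1)
    (f : ℝ → EuclideanSpace ℝ (Fin (4 + m))) (hf : ContinuousOn f (Set.Icc 0 1))
    (h0 : projFour m (f 0) = yPt a b) (h1 : projFour m (f 1) = zPt a b)
    (hS : ∀ t ∈ Set.Icc (0 : ℝ) 1, projFour m (f t) ∈ S)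
    (j : Fin m) (hj : 1 / 2 ≤ |f 1 (Fin.natAdd 4 j) - f 0 (Fin.natAdd 4 j)|) :
    ENNReal.ofReal (3 / 2) ≤ eVariationOn f (Set.Icc 0 1) := by
  classical
  set J : Fin (4+m) := Fin.natAdd 4 j with hJ
  set I0 : Fin (4+m) := Fin.castAdd m (0:Fin 4) with hI0
  set I1 : Fin (4+m) := Fin.castAdd m (1:Fin 4) with hI1
  set I2 : Fin (4+m) := Fin.castAdd m (2:Fin 4) with hI2
  set I3 : Fin (4+m) := Fin.castAdd m (3:Fin 4) with hI3
  -- distinctness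
  have ne01 : I0 ≠ I1 := by simp [hI0, hI1, Fin.ext_iff]
  have ne02 : I0 ≠ I2 := by simp [hI0, hI2, Fin.ext_iff]
  have ne03 : I0 ≠ I3 := by simp [hI0, hI3, Fin.ext_iff]
  have ne12 : I1 ≠ I2 := by simp [hI1, hI2, Fin.ext_iff]
  have ne13 : I1 ≠ I3 := by simp [hI1, hI3, Fin.ext_iff]
  have ne23 : I2 ≠ I3 := by simp [hI2, hI3, Fin.ext_iff]
  have neJ : ∀ i : Fin 4, Fin.castAdd m i ≠ J := by
    intro i h; have := congrArg Fin.val h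
    simp [hJ] at this; omega
  -- endpoint coordinates
  have hy0 : f 0 I0 = a := congrArg (fun v => v (0:Fin 4)) h0
  have hy1 : f 0 I1 = 0 := congrArg (fun v => v (1:Fin 4)) h0
  have hy2 : f 0 I2 = b := congrArg (fun v => v (2:Fin 4)) h0
  have hy3 : f 0 I3 = 0 := congrArg (fun v => v (3:Fin 4)) h0
  have hz0 : f 1 I0 = 1 := congrArg (fun v => v (0:Fin 4)) h1
  have hz1 : f 1 I1 = a := congrArg (fun v => v (1:Fin 4)) h1
  have hz2 : f 1 I2 = 1 := congrArg (fun v => v (2:Fin 4)) h1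
  have hz3 : f 1 I3 = b := congrArg (fun v => v (3:Fin 4)) h1
  -- structure of S
  have hface : ∀ t ∈ Set.Icc (0:ℝ) 1,
      (f t I1 = 0 ∨ f t I0 = 1) ∧ (f t I3 = 0 ∨ f t I2 = 1) := by
    intro t ht
    obtain ⟨hu, _⟩ := hS t ht
    have : (f t I1 = 0 ∧ f t I3 = 0) ∨ (f t I1 = 0 ∧ f t I2 = 1) ∨
        (f t I0 = 1 ∧ f t I3 = 0) ∨ (f t I0 = 1 ∧ f t I2 = 1) := by
      rcases hu with ((h | h) | h) | h
      · exact Or.inl h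
      · exact Or.inr (Or.inl h)
      · exact Or.inr (Or.inr (Or.inl h))
      · exact Or.inr (Or.inr (Or.inr h))
    tauto
  -- continuity of coordinates
  have hc : ∀ (I : Fin (4+m)), ContinuousOn (fun t => f t I) (Set.Icc (0:ℝ) 1) :=
    fun I => (EuclideanSpace.proj I).continuous.comp_continuousOn hf
  have h0mem : (0:ℝ) ∈ Set.Icc (0:ℝ) 1 := ⟨le_refl 0, zero_le_one⟩
  have h1mem : (1:ℝ) ∈ Set.Icc (0:ℝ) 1 := ⟨zero_le_one, le_refl 1⟩
  -- find t1 with f t1 I1 = 0 and f t1 I0 = 1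
  have hfind : ∀ (P Q : Fin (4+m)) (p q : ℝ), f 0 P = p → f 1 Q = q →
      (∀ t ∈ Set.Icc (0:ℝ) 1, f t P = p ∨ f t Q = q) →
      ∃ t ∈ Set.Icc (0:ℝ) 1, f t P = p ∧ f t Q = q := by
    intro P Q p q hP hQ hcov
    have hA : IsClosed (Set.Icc (0:ℝ) 1 ∩ (fun t => f t P) ⁻¹' {p}) :=
      (hc P).preimage_isClosed_of_isClosed isClosed_Icc isClosed_singleton
    have hB : IsClosed (Set.Icc (0:ℝ) 1 ∩ (fun t => f t Q) ⁻¹' {q}) :=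
      (hc Q).preimage_isClosed_of_isClosed isClosed_Icc isClosed_singleton
    have hcover : Set.Icc (0:ℝ) 1 ⊆
        (Set.Icc (0:ℝ) 1 ∩ (fun t => f t P) ⁻¹' {p}) ∪
        (Set.Icc (0:ℝ) 1 ∩ (fun t => f t Q) ⁻¹' {q}) := by
      intro t ht
      rcases hcov t ht with h | h
      · exact Or.inl ⟨ht, h⟩
      · exact Or.inr ⟨ht, h⟩
    obtain ⟨t, ht, ⟨_, hP'⟩, ⟨_, hQ'⟩⟩ :=
      isPreconnected_closed_iff.mp isPreconnected_Icc _ _ hA hB hcover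
        ⟨0, h0mem, h0mem, hP⟩ ⟨1, h1mem, h1mem, hQ⟩
    exact ⟨t, ht, hP', hQ'⟩
  obtain ⟨t1, ht1, ht1a, ht1b⟩ := hfind I1 I0 0 1 hy1 hz0
    (fun t ht => (hface t ht).1)
  obtain ⟨t2, ht2, ht2a, ht2b⟩ := hfind I3 I2 0 1 hy3 hz2
    (fun t ht => (hface t ht).2)
  -- abs triangle for the J coordinate
  have ztri : ∀ s1 s2 : ℝ, (1:ℝ)/2 ≤ |f 0 J - f s1 J| + |f s1 J - f s2 J| + |f s2 J - f 1 J| := by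
    intro s1 s2
    have h1' : |f 0 J - f 1 J| ≤ |f 0 J - f s2 J| + |f s2 J - f 1 J| := abs_sub_le _ _ _
    have h2' : |f 0 J - f s2 J| ≤ |f 0 J - f s1 J| + |f s1 J - f s2 J| := abs_sub_le _ _ _
    have h3' : |f 1 J - f 0 J| = |f 0 J - f 1 J| := abs_sub_comm _ _
    rw [h3'] at hj; linarith
  rcases le_total t1 t2 with h12 | h21
  · refine le_trans ?_ (evar_lb f t1 t2 ht1.1 h12 ht2.2)
    apply ENNReal.ofReal_le_ofReal
    have d1 := dist_lb (f 0) (f t1) I0 I2 J ne02 (neJ 0) (neJ 2)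
    have d2 := dist_lb (f t1) (f t2) I1 I2 J ne12 (neJ 1) (neJ 2)
    have d3 := dist_lb (f t2) (f 1) I1 I3 J ne13 (neJ 1) (neJ 3)
    rw [hy0, hy2, ht1b] at d1
    rw [ht1a, ht2b] at d2
    rw [ht2a, hz1, hz3] at d3
    have zt := ztri t1 t2
    set c := f t1 I2
    set e := f t2 I1
    have l1 : (1:ℝ) - a ≤ |a - 1| := by rw [abs_sub_comm]; exact le_abs_self _
    have l2 : c - b ≤ |b - c| := by rw [abs_sub_comm]; exact le_abs_self _
    have l3 : e ≤ |0 - e| := by rw [zero_sub, abs_neg]; exact le_abs_self _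
    have l4 : 1 - c ≤ |c - 1| := by rw [abs_sub_comm]; exact le_abs_self _
    have l5 : a - e ≤ |e - a| := by rw [abs_sub_comm]; exact le_abs_self _
    have l6 : b ≤ |0 - b| := by rw [zero_sub, abs_neg]; exact le_abs_self _
    linarith
  · refine le_trans ?_ (evar_lb f t2 t1 ht2.1 h21 ht1.2)
    apply ENNReal.ofReal_le_ofReal
    have d1 := dist_lb (f 0) (f t2) I0 I2 J ne02 (neJ 0) (neJ 2)
    have d2 := dist_lb (f t2) (f t1) I0 I3 J ne03 (neJ 0) (neJ 3)
    have d3 := dist_lb (f t1) (f 1) I1 I3 J ne13 (neJ 1) (neJ 3)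
    rw [hy0, hy2, ht2b] at d1
    rw [ht1b, ht2a] at d2
    rw [ht1a, hz1, hz3] at d3
    have zt := ztri t2 t1
    set e := f t2 I0
    set d' := f t1 I3
    have l1 : e - a ≤ |a - e| := by rw [abs_sub_comm]; exact le_abs_self _
    have l2 : (1:ℝ) - b ≤ |b - 1| := by rw [abs_sub_comm]; exact le_abs_self _
    have l3 : 1 - e ≤ |e - 1| := by rw [abs_sub_comm]; exact le_abs_self _
    have l4 : d' ≤ |0 - d'| := by rw [zero_sub, abs_neg]; exact le_abs_self _
    have l5 : a ≤ |0 - a| := by rw [zero_sub, abs_neg]; exact le_abs_self _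
    have l6 : b - d' ≤ |d' - b| := by rw [abs_sub_comm]; exact le_abs_self _
    linarith
end

section
/- Let n ≥ 1, let f : ℝ → EuclideanSpace ℝ (Fin (n+1)), and let g : ℝ → EuclideanSpace ℝ (Fin n) be the projection forgetting the last coordinate, g t i := f t (Fin.castSucc i). Let a ≤ b be real numbers and let L ≥ 0. If ENNReal.ofReal L ≤ eVariationOn g (Set.Icc a b), then ENNReal.ofReal (Real.sqrt (L^2 + (f b (Fin.last n) − f a (Fin.last n))^2)) ≤ eVariationOn f (Set.Icc a b). -/
open scoped ENNReal

private lemma stmt6_mink (N : ℕ) (x y : ℕ → ℝ) :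
    Real.sqrt ((∑ j ∈ Finset.range N, x j)^2 + (∑ j ∈ Finset.range N, y j)^2)
      ≤ ∑ j ∈ Finset.range N, Real.sqrt ((x j)^2 + (y j)^2) := by
  have h := norm_sum_le (Finset.range N) (fun j => (⟨x j, y j⟩ : ℂ))
  have h1 : ∀ (u v : ℝ), ‖(⟨u, v⟩ : ℂ)‖ = Real.sqrt (u^2 + v^2) := by
    intro u v
    rw [Complex.norm_def, Complex.normSq_mk]
    ring_nf
  have h2 : (∑ j ∈ Finset.range N, (⟨x j, y j⟩ : ℂ)) =
      ⟨∑ j ∈ Finset.range N, x j, ∑ j ∈ Finset.range N, y j⟩ := by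
    apply Complex.ext <;> simp [Complex.re_sum, Complex.im_sum]
  rw [h2, h1] at h
  simpa [h1] using h

private lemma stmt6_aux1 (Lr Sg δ Δ : ℝ) (hL : 0 ≤ Lr) (hS : 0 ≤ Sg) (hδ : 0 ≤ δ)
    (hLe : Lr ≤ Sg + δ) :
    Real.sqrt (Lr^2+Δ^2) ≤ Real.sqrt (Sg^2+Δ^2) + δ := by
  have h4 : Sg ≤ Real.sqrt (Sg^2+Δ^2) := by
    have h5 := Real.sqrt_le_sqrt (show Sg^2 ≤ Sg^2+Δ^2 by nlinarith)
    rwa [Real.sqrt_sq hS] at h5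
  have h3 : Lr^2+Δ^2 ≤ (Real.sqrt (Sg^2+Δ^2) + δ)^2 := by
    nlinarith [Real.sq_sqrt (show (0:ℝ) ≤ Sg^2+Δ^2 by positivity), Real.sqrt_nonneg (Sg^2+Δ^2)]
  calc Real.sqrt (Lr^2+Δ^2) ≤ Real.sqrt ((Real.sqrt (Sg^2+Δ^2) + δ)^2) := Real.sqrt_le_sqrt h3
    _ = Real.sqrt (Sg^2+Δ^2) + δ := Real.sqrt_sq (by positivity)

private lemma stmt6_dist_split (n : ℕ) (x y : EuclideanSpace ℝ (Fin (n + 1)))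
    (p q : EuclideanSpace ℝ (Fin n))
    (hp : ∀ i, p i = x (Fin.castSucc i)) (hq : ∀ i, q i = y (Fin.castSucc i)) :
    dist x y = Real.sqrt ((dist p q)^2 + (x (Fin.last n) - y (Fin.last n))^2) := by
  rw [EuclideanSpace.dist_eq x y, EuclideanSpace.dist_eq p q, Real.sq_sqrt (by positivity),
    Fin.sum_univ_castSucc]
  congr 1
  · congr 1
    · exact Finset.sum_congr rfl fun i _ => by rw [hp, hq]
    · rw [Real.dist_eq, sq_abs]

private lemma stmt6_key (n : ℕ) (f : ℝ → EuclideanSpace ℝ (Fin (n + 1)))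
    (g : ℝ → EuclideanSpace ℝ (Fin n))
    (hg : ∀ t : ℝ, ∀ i : Fin n, g t i = f t (Fin.castSucc i))
    (a b : ℝ) (hab : a ≤ b) (m : ℕ) (u : ℕ → ℝ) (hu : Monotone u)
    (us : ∀ i, u i ∈ Set.Icc a b) :
    ENNReal.ofReal (Real.sqrt ((∑ i ∈ Finset.range m, dist (g (u (i+1))) (g (u i)))^2
        + (f b (Fin.last n) - f a (Fin.last n))^2)) ≤ eVariationOn f (Set.Icc a b) := by
  classical
  set Δ := f b (Fin.last n) - f a (Fin.last n) with hΔ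
  set v : ℕ → ℝ := fun j => if j = 0 then a else if j ≤ m + 1 then u (j - 1) else b with hv
  have hv0 : v 0 = a := by simp [hv]
  have hvm : v (m + 2) = b := by
    simp only [hv]
    rw [if_neg (by omega), if_neg (by omega)]
  have hvmid : ∀ j, 1 ≤ j → j ≤ m + 1 → v j = u (j - 1) := by
    intro j h1 h2
    simp only [hv]
    rw [if_neg (by omega), if_pos h2]
  have hvmem : ∀ j, v j ∈ Set.Icc a b := by
    intro j
    simp only [hv]
    split_ifs
    · exact ⟨le_rfl, hab⟩
    · exact us _
    · exact ⟨hab, le_rfl⟩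
  have hvmono : Monotone v := by
    apply monotone_nat_of_le_succ
    intro j
    rcases Nat.eq_zero_or_pos j with rfl | hj
    · rw [hv0, hvmid 1 le_rfl (by omega)]
      exact (us 0).1
    · by_cases h1 : j ≤ m
      · rw [hvmid j hj (by omega), hvmid (j+1) (by omega) (by omega)]
        exact hu (by omega)
      · by_cases h2 : j = m + 1
        · subst h2
          rw [hvmid (m+1) (by omega) le_rfl, show m + 1 + 1 = m + 2 from rfl, hvm]
          simpa using (us m).2
        · have hb1 : v j = b := by
            simp only [hv]; rw [if_neg (by omega), if_neg (by omega)]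
          have hb2 : v (j+1) = b := by
            simp only [hv]; rw [if_neg (by omega), if_neg (by omega)]
          rw [hb1, hb2]
  set x : ℕ → ℝ := fun j => dist (g (v (j+1))) (g (v j)) with hx
  set y : ℕ → ℝ := fun j => f (v (j+1)) (Fin.last n) - f (v j) (Fin.last n) with hy
  have hincr : ∀ j, dist (f (v (j+1))) (f (v j)) = Real.sqrt ((x j)^2 + (y j)^2) := by
    intro j
    exact stmt6_dist_split n (f (v (j+1))) (f (v j)) (g (v (j+1))) (g (v j))
      (fun i => hg _ i) (fun i => hg _ i)
  have htel : ∑ j ∈ Finset.range (m+2), y j = Δ := by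
    have := Finset.sum_range_sub (fun j => f (v j) (Fin.last n)) (m+2)
    simp only [hy]
    rw [this, hvm, hv0]
  have hsum : ∑ i ∈ Finset.range m, dist (g (u (i+1))) (g (u i))
      ≤ ∑ j ∈ Finset.range (m+2), x j := by
    have e1 : ∀ i ∈ Finset.range m, dist (g (u (i+1))) (g (u i)) = x (i+1) := by
      intro i hi
      rw [Finset.mem_range] at hi
      simp only [hx]
      rw [hvmid (i+1+1) (by omega) (by omega), hvmid (i+1) (by omega) (by omega)]
      norm_num
    rw [Finset.sum_congr rfl e1]
    rw [Finset.sum_range_succ' x (m+1)]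
    have e2 : ∑ i ∈ Finset.range m, x (i+1) ≤ ∑ i ∈ Finset.range (m+1), x (i+1) := by
      apply Finset.sum_le_sum_of_subset_of_nonneg
      · exact Finset.range_subset_range.mpr (by omega)
      · intro i _ _; exact dist_nonneg
    have e3 : (0:ℝ) ≤ x 0 := dist_nonneg
    linarith
  set Su := ∑ i ∈ Finset.range m, dist (g (u (i+1))) (g (u i)) with hSu
  have hSu0 : 0 ≤ Su := Finset.sum_nonneg fun i _ => dist_nonneg
  have hT : Real.sqrt (Su^2 + Δ^2) ≤ ∑ j ∈ Finset.range (m+2), dist (f (v (j+1))) (f (v j)) := by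
    calc Real.sqrt (Su^2 + Δ^2)
        ≤ Real.sqrt ((∑ j ∈ Finset.range (m+2), x j)^2 + Δ^2) := by
          apply Real.sqrt_le_sqrt
          have := pow_le_pow_left₀ hSu0 hsum 2
          linarith
      _ = Real.sqrt ((∑ j ∈ Finset.range (m+2), x j)^2
          + (∑ j ∈ Finset.range (m+2), y j)^2) := by rw [htel]
      _ ≤ ∑ j ∈ Finset.range (m+2), Real.sqrt ((x j)^2 + (y j)^2) := stmt6_mink _ x y
      _ = ∑ j ∈ Finset.range (m+2), dist (f (v (j+1))) (f (v j)) := by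
          exact Finset.sum_congr rfl fun j _ => (hincr j).symm
  have hvar := eVariationOn.sum_le (f := f) (n := m+2) hvmono hvmem
  have hvar' : ENNReal.ofReal (∑ j ∈ Finset.range (m+2), dist (f (v (j+1))) (f (v j)))
      ≤ eVariationOn f (Set.Icc a b) := by
    rw [ENNReal.ofReal_sum_of_nonneg (fun i _ => dist_nonneg)]
    simpa only [edist_dist] using hvar
  exact le_trans (ENNReal.ofReal_le_ofReal hT) hvar'

theorem stmt6 (n : ℕ) (hn : 1 ≤ n) (f : ℝ → EuclideanSpace ℝ (Fin (n + 1)))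
    (g : ℝ → EuclideanSpace ℝ (Fin n))
    (hg : ∀ t : ℝ, ∀ i : Fin n, g t i = f t (Fin.castSucc i))
    (a b : ℝ) (hab : a ≤ b) (L : ℝ) (hL : 0 ≤ L)
    (h : ENNReal.ofReal L ≤ eVariationOn g (Set.Icc a b)) :
    ENNReal.ofReal (Real.sqrt (L ^ 2 + (f b (Fin.last n) - f a (Fin.last n)) ^ 2)) ≤
      eVariationOn f (Set.Icc a b) := by
  set Δ := f b (Fin.last n) - f a (Fin.last n) with hΔ
  rcases eq_or_lt_of_le hL with rfl | hLpos
  · have h0 := stmt6_key n f g hg a b hab 0 (fun _ => a) monotone_const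
      (fun _ => ⟨le_rfl, hab⟩)
    simpa using h0
  · apply ENNReal.le_of_forall_pos_le_add
    intro ε hε _
    set δ := min (ε : ℝ) L with hδdef
    have hδpos : 0 < δ := lt_min (by exact_mod_cast hε) hLpos
    have hδL : δ ≤ L := min_le_right _ _
    have h1 : ENNReal.ofReal (L - δ) < eVariationOn g (Set.Icc a b) :=
      lt_of_lt_of_le (by rw [ENNReal.ofReal_lt_ofReal_iff hLpos]; linarith) h
    rw [eVariationOn] at h1
    obtain ⟨⟨m, u, hu, us⟩, hp⟩ := lt_iSup_iff.mp h1
    have hed : (∑ i ∈ Finset.range m, edist (g (u (i+1))) (g (u i)))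
        = ENNReal.ofReal (∑ i ∈ Finset.range m, dist (g (u (i+1))) (g (u i))) := by
      rw [ENNReal.ofReal_sum_of_nonneg (fun i _ => dist_nonneg)]
      simp only [edist_dist]
    rw [hed, ENNReal.ofReal_lt_ofReal_iff_of_nonneg (by linarith)] at hp
    set Su := ∑ i ∈ Finset.range m, dist (g (u (i+1))) (g (u i)) with hSu
    have hSu0 : 0 ≤ Su := Finset.sum_nonneg fun i _ => dist_nonneg
    have hkey := stmt6_key n f g hg a b hab m u hu us
    have hfinal : Real.sqrt (L^2 + Δ^2) ≤ Real.sqrt (Su^2 + Δ^2) + δ :=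
      stmt6_aux1 L Su δ Δ hL hSu0 hδpos.le (by linarith)
    calc ENNReal.ofReal (Real.sqrt (L^2 + Δ^2))
        ≤ ENNReal.ofReal (Real.sqrt (Su^2 + Δ^2) + δ) := ENNReal.ofReal_le_ofReal hfinal
      _ = ENNReal.ofReal (Real.sqrt (Su^2 + Δ^2)) + ENNReal.ofReal δ :=
          ENNReal.ofReal_add (Real.sqrt_nonneg _) hδpos.le
      _ ≤ eVariationOn f (Set.Icc a b) + ε := by
          apply add_le_add hkey
          rw [← ENNReal.ofReal_coe_nnreal]
          exact ENNReal.ofReal_le_ofReal (min_le_left _ _)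
end
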